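/- arXiv:0903.0563 — 7 statements merged into one kernel-verified Lean document; each statement's English description precedes it below -/
import Mathlib

section
/- Let $H$ be a self-adjoint operator with orthonormal basis of eigenvectors $\phi_j$ and eigenvalues $\lambda_j$, and let $G$ be a bounded operator. Then for any eigenvector $\phi_j$ and any real $z$: $\tfrac12(z-\lambda_j)^2\big(\langle[G^*,[H,G]]\phi_j,\phi_j\rangle+\langle[G,[H,G^*]]\phi_j,\phi_j\rangle\big)-(z-\lambda_j)\big(\|[H,G]\phi_j\|^2+\|[H,G^*]\phi_j\|^2\big)=\sum_k(z-\lambda_j)(z-\lambda_k)(\lambda_k-\lambda_j)\big(|\langle G\phi_j,\phi_k\rangle|^2+|\langle G^*\phi_j,\phi_k\rangle|^2\big)$ (sum over the full orthonormal basis). -/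
open scoped InnerProductSpace ComplexConjugate

/-- Commutator of two endomorphisms. -/
def opComm {R : Type*} [Ring R] (A B : R) : R := A * B - B * A

section Aux

variable {n : ℕ}

lemma inner_self' (v : EuclideanSpace ℂ (Fin n)) :
    ⟪v, v⟫_ℂ = ((‖v‖ : ℝ) : ℂ) ^ 2 := by
  exact_mod_cast inner_self_eq_norm_sq_to_K v

lemma hprod (b : OrthonormalBasis (Fin n) ℂ (EuclideanSpace ℂ (Fin n)))
    (v : EuclideanSpace ℂ (Fin n)) (k : Fin n) :
    ⟪v, b k⟫_ℂ * ⟪b k, v⟫_ℂ = ((‖⟪v, b k⟫_ℂ‖ : ℝ) : ℂ) ^ 2 := by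
  rw [← inner_conj_symm (b k) v]
  exact_mod_cast RCLike.mul_conj _

lemma parseval (b : OrthonormalBasis (Fin n) ℂ (EuclideanSpace ℂ (Fin n)))
    (v : EuclideanSpace ℂ (Fin n)) :
    ((‖v‖ : ℝ) : ℂ) ^ 2 = ∑ k, ((‖⟪v, b k⟫_ℂ‖ : ℝ) : ℂ) ^ 2 := by
  rw [← inner_self', ← b.sum_inner_mul_inner v v]
  exact Finset.sum_congr rfl fun k _ => hprod b v k

variable (H : EuclideanSpace ℂ (Fin n) →ₗ[ℂ] EuclideanSpace ℂ (Fin n))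
    (hH : LinearMap.adjoint H = H)
    (b : OrthonormalBasis (Fin n) ℂ (EuclideanSpace ℂ (Fin n)))
    (lam : Fin n → ℝ)
    (heig : ∀ k, H (b k) = (lam k : ℂ) • b k)

include hH heig

lemma inner_H_right (k : Fin n) (x : EuclideanSpace ℂ (Fin n)) :
    ⟪b k, H x⟫_ℂ = (lam k : ℂ) * ⟪b k, x⟫_ℂ := by
  rw [← LinearMap.adjoint_inner_left, hH, heig, inner_smul_left, Complex.conj_ofReal]

lemma inner_H_left (k : Fin n) (x : EuclideanSpace ℂ (Fin n)) :
    ⟪H x, b k⟫_ℂ = (lam k : ℂ) * ⟪x, b k⟫_ℂ := by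
  rw [← inner_conj_symm, ← inner_conj_symm x, inner_H_right H hH b lam heig, map_mul,
    Complex.conj_ofReal]

lemma inner_comm_right (A : EuclideanSpace ℂ (Fin n) →ₗ[ℂ] EuclideanSpace ℂ (Fin n))
    (j k : Fin n) :
    ⟪b k, opComm H A (b j)⟫_ℂ = ((lam k : ℂ) - lam j) * ⟪b k, A (b j)⟫_ℂ := by
  simp only [opComm, LinearMap.sub_apply, Module.End.mul_apply, inner_sub_right,
    inner_H_right H hH b lam heig, heig j, map_smul, inner_smul_right]
  ring

lemma inner_comm_left (A : EuclideanSpace ℂ (Fin n) →ₗ[ℂ] EuclideanSpace ℂ (Fin n))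
    (j k : Fin n) :
    ⟪opComm H A (b j), b k⟫_ℂ = ((lam k : ℂ) - lam j) * ⟪A (b j), b k⟫_ℂ := by
  rw [← inner_conj_symm, ← inner_conj_symm (A (b j)), inner_comm_right H hH b lam heig,
    map_mul, map_sub, Complex.conj_ofReal, Complex.conj_ofReal]

lemma key2 (A : EuclideanSpace ℂ (Fin n) →ₗ[ℂ] EuclideanSpace ℂ (Fin n)) (j : Fin n) :
    ((‖opComm H A (b j)‖ : ℝ) : ℂ) ^ 2
      = ∑ k, ((lam k : ℂ) - lam j) ^ 2 * ((‖⟪A (b j), b k⟫_ℂ‖ : ℝ) : ℂ) ^ 2 := by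
  rw [← inner_self', ← b.sum_inner_mul_inner]
  refine Finset.sum_congr rfl fun k _ => ?_
  rw [inner_comm_left H hH b lam heig, inner_comm_right H hH b lam heig, ← hprod b]
  ring

lemma key1 (A : EuclideanSpace ℂ (Fin n) →ₗ[ℂ] EuclideanSpace ℂ (Fin n)) (j : Fin n) :
    ⟪opComm (LinearMap.adjoint A) (opComm H A) (b j), b j⟫_ℂ
      = ∑ k, ((lam k : ℂ) - lam j) *
          (((‖⟪A (b j), b k⟫_ℂ‖ : ℝ) : ℂ) ^ 2
            + ((‖⟪LinearMap.adjoint A (b j), b k⟫_ℂ‖ : ℝ) : ℂ) ^ 2) := by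
  set w := LinearMap.adjoint A (b j) with hw
  have hT1 : ⟪LinearMap.adjoint A (opComm H A (b j)), b j⟫_ℂ
      = ∑ k, ((lam k : ℂ) - lam j) * ((‖⟪A (b j), b k⟫_ℂ‖ : ℝ) : ℂ) ^ 2 := by
    rw [LinearMap.adjoint_inner_left, ← b.sum_inner_mul_inner]
    refine Finset.sum_congr rfl fun k _ => ?_
    rw [inner_comm_left H hH b lam heig, ← hprod b]
    ring
  have hHw : ∀ x : EuclideanSpace ℂ (Fin n),
      ⟪H x, x⟫_ℂ = ∑ k, (lam k : ℂ) * ((‖⟪x, b k⟫_ℂ‖ : ℝ) : ℂ) ^ 2 := by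
    intro x
    rw [← b.sum_inner_mul_inner]
    refine Finset.sum_congr rfl fun k _ => ?_
    rw [inner_H_left H hH b lam heig, ← hprod b]
    ring
  have hT2 : ⟪opComm H A w, b j⟫_ℂ
      = ∑ k, ((lam j : ℂ) - lam k) * ((‖⟪w, b k⟫_ℂ‖ : ℝ) : ℂ) ^ 2 := by
    have h1 : ⟪H (A w), b j⟫_ℂ = (lam j : ℂ) * ∑ k, ((‖⟪w, b k⟫_ℂ‖ : ℝ) : ℂ) ^ 2 := by
      rw [inner_H_left H hH b lam heig j, ← LinearMap.adjoint_inner_right A, ← hw,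
        inner_self', parseval b]
    have h2 : ⟪A (H w), b j⟫_ℂ = ∑ k, (lam k : ℂ) * ((‖⟪w, b k⟫_ℂ‖ : ℝ) : ℂ) ^ 2 := by
      rw [← LinearMap.adjoint_inner_right A, ← hw, hHw w]
    simp only [opComm, LinearMap.sub_apply, Module.End.mul_apply, inner_sub_left, h1, h2,
      Finset.mul_sum, ← Finset.sum_sub_distrib]
    refine Finset.sum_congr rfl fun k _ => ?_
    ring
  have hsplit : ⟪opComm (LinearMap.adjoint A) (opComm H A) (b j), b j⟫_ℂ
      = ⟪LinearMap.adjoint A (opComm H A (b j)), b j⟫_ℂ - ⟪opComm H A w, b j⟫_ℂ := by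
    simp [opComm, LinearMap.sub_apply, Module.End.mul_apply, inner_sub_left, hw]
  rw [hsplit, hT1, hT2, ← Finset.sum_sub_distrib]
  refine Finset.sum_congr rfl fun k _ => ?_
  ring

end Aux

/-- sum rule for a single eigenvector.  `H` is self-adjoint with orthonormal
eigenbasis `b` and eigenvalues `lam`, `G` arbitrary.  For any `j` and real `z`:
`(1/2)(z-λⱼ)²(⟨[G*,[H,G]]φⱼ,φⱼ⟩+⟨[G,[H,G*]]φⱼ,φⱼ⟩) - (z-λⱼ)(‖[H,G]φⱼ‖²+‖[H,G*]φⱼ‖²)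
  = ∑ₖ (z-λⱼ)(z-λₖ)(λₖ-λⱼ)(|⟨Gφⱼ,φₖ⟩|²+|⟨G*φⱼ,φₖ⟩|²)`. -/
theorem stmt_1 (n : ℕ)
    (H G : EuclideanSpace ℂ (Fin n) →ₗ[ℂ] EuclideanSpace ℂ (Fin n))
    (hH : LinearMap.adjoint H = H)
    (b : OrthonormalBasis (Fin n) ℂ (EuclideanSpace ℂ (Fin n)))
    (lam : Fin n → ℝ)
    (heig : ∀ k, H (b k) = (lam k : ℂ) • b k)
    (z : ℝ) (j : Fin n) :
    (1/2 : ℂ) * ((z : ℂ) - lam j)^2 *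
        (⟪opComm (LinearMap.adjoint G) (opComm H G) (b j), b j⟫_ℂ
          + ⟪opComm G (opComm H (LinearMap.adjoint G)) (b j), b j⟫_ℂ)
      - ((z : ℂ) - lam j) *
        ((‖opComm H G (b j)‖^2 + ‖opComm H (LinearMap.adjoint G) (b j)‖^2 : ℝ) : ℂ)
    = ∑ k, (((z - lam j) * (z - lam k) * (lam k - lam j) *
        (‖⟪G (b j), b k⟫_ℂ‖^2 + ‖⟪LinearMap.adjoint G (b j), b k⟫_ℂ‖^2) : ℝ) : ℂ) := by
  have e1 := key1 H hH b lam heig G j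
  have e2 := key1 H hH b lam heig (LinearMap.adjoint G) j
  rw [LinearMap.adjoint_adjoint] at e2
  have e3 := key2 H hH b lam heig G j
  have e4 := key2 H hH b lam heig (LinearMap.adjoint G) j
  have hcast : ((‖opComm H G (b j)‖^2 + ‖opComm H (LinearMap.adjoint G) (b j)‖^2 : ℝ) : ℂ)
      = ((‖opComm H G (b j)‖ : ℝ) : ℂ) ^ 2
        + ((‖opComm H (LinearMap.adjoint G) (b j)‖ : ℝ) : ℂ) ^ 2 := by push_cast; ring
  rw [e1, e2, hcast, e3, e4, ← Finset.sum_add_distrib, ← Finset.sum_add_distrib,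
    Finset.mul_sum, Finset.mul_sum, ← Finset.sum_sub_distrib]
  refine Finset.sum_congr rfl fun k _ => ?_
  push_cast
  ring
end

section
/- Let $H$ be a self-adjoint matrix, $P$ a spectral projector of $H$, $G$ any matrix, and set $A=(1-P)GP$, $B=PG(1-P)$. Then $\mathrm{tr}\big(H^2(G^*[H,G]+G[H,G^*])P\big)-\mathrm{tr}\big(H([H,G^*][H,G]+[H,G][H,G^*])P\big)=\mathrm{tr}\big(HA^*H^2A-HAH^2A^*\big)+\mathrm{tr}\big(HBH^2B^*-HB^*H^2B\big)$. -/
open scoped Matrix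
open Matrix

/-- the general trace identity.  `H` Hermitian, `P` an orthogonal projection
commuting with `H`, `G` arbitrary, `A = (1-P)GP`, `B = PG(1-P)`.  Then
`tr(H²(G*[H,G]+G[H,G*])P) - tr(H([H,G*][H,G]+[H,G][H,G*])P)
  = tr(HA*H²A - HAH²A*) + tr(HBH²B* - HB*H²B)`. -/
theorem stmt_3 (n : ℕ) (H P G : Matrix (Fin n) (Fin n) ℂ)
    (hH : Hᴴ = H) (hPproj : P * P = P) (hPherm : Pᴴ = P) (hPH : P * H = H * P)
    (A B : Matrix (Fin n) (Fin n) ℂ)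
    (hA : A = (1 - P) * G * P) (hB : B = P * G * (1 - P)) :
    trace (H^2 * (Gᴴ * opComm H G + G * opComm H Gᴴ) * P)
      - trace (H * (opComm H Gᴴ * opComm H G + opComm H G * opComm H Gᴴ) * P)
    = trace (H * Aᴴ * H^2 * A - H * A * H^2 * Aᴴ)
      + trace (H * B * H^2 * Bᴴ - H * Bᴴ * H^2 * B) := by
  subst hA hB
  have hPH' : ∀ X : Matrix (Fin n) (Fin n) ℂ, P * (H * X) = H * (P * X) := by
    intro X; rw [← mul_assoc, hPH, mul_assoc]
  have hPP' : ∀ X : Matrix (Fin n) (Fin n) ℂ, P * (P * X) = P * X := by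
    intro X; rw [← mul_assoc, hPproj]
  simp only [opComm, pow_two, conjTranspose_mul, conjTranspose_sub, conjTranspose_one,
    hPherm, mul_add, add_mul, mul_sub, sub_mul, mul_one, one_mul, mul_assoc,
    hPH', hPH, hPP', hPproj, trace_add, trace_sub]
  have e1 : trace (H*(H*(Gᴴ*(H*(G*P))))) = trace (H*(G*(H*(H*(P*Gᴴ))))) := by
    rw [show H*(H*(Gᴴ*(H*(G*P)))) = (H*H*Gᴴ)*(H*(G*P)) by noncomm_ring,
      Matrix.trace_mul_comm]
    simp only [mul_assoc, hPH', hPH, hPP', hPproj]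
  have e2 : trace (H*(H*(Gᴴ*(G*(H*P))))) = trace (G*(H*(H*(H*(P*Gᴴ))))) := by
    rw [show H*(H*(Gᴴ*(G*(H*P)))) = (H*H*Gᴴ)*(G*(H*P)) by noncomm_ring,
      Matrix.trace_mul_comm]
    simp only [mul_assoc, hPH', hPH, hPP', hPproj]
  have e3 : trace (H*(H*(G*(H*(Gᴴ*P))))) = trace (H*(H*(P*(G*(H*Gᴴ))))) := by
    rw [show H*(H*(G*(H*(Gᴴ*P)))) = (H*H*(G*(H*Gᴴ)))*P by noncomm_ring,
      Matrix.trace_mul_comm]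
    simp only [mul_assoc, hPH', hPH, hPP', hPproj]
  have e4 : trace (H*(H*(G*(Gᴴ*(H*P))))) = trace (H*(H*(H*(P*(G*Gᴴ))))) := by
    rw [show H*(H*(G*(Gᴴ*(H*P)))) = (H*H*(G*Gᴴ))*(H*P) by noncomm_ring,
      Matrix.trace_mul_comm]
    simp only [mul_assoc, hPH', hPH, hPP', hPproj]
  have e5 : trace (H*(Gᴴ*(H*(H*(G*P))))) = trace (H*(H*(G*(H*(P*Gᴴ))))) := by
    rw [show H*(Gᴴ*(H*(H*(G*P)))) = (H*Gᴴ)*(H*(H*(G*P))) by noncomm_ring,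
      Matrix.trace_mul_comm]
    simp only [mul_assoc, hPH', hPH, hPP', hPproj]
  have e6 : trace (H*(Gᴴ*(H*(G*(H*P))))) = trace (H*(G*(H*(H*(P*Gᴴ))))) := by
    rw [show H*(Gᴴ*(H*(G*(H*P)))) = (H*Gᴴ)*(H*(G*(H*P))) by noncomm_ring,
      Matrix.trace_mul_comm]
    simp only [mul_assoc, hPH', hPH, hPP', hPproj]
  have e7 : trace (H*(G*(H*(H*(Gᴴ*P))))) = trace (H*(P*(G*(H*(H*Gᴴ))))) := by
    rw [show H*(G*(H*(H*(Gᴴ*P)))) = (H*(G*(H*(H*Gᴴ))))*P by noncomm_ring,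
      Matrix.trace_mul_comm]
    simp only [mul_assoc, hPH', hPH, hPP', hPproj]
  have e8 : trace (H*(G*(H*(Gᴴ*(H*P))))) = trace (H*(H*(P*(G*(H*Gᴴ))))) := by
    rw [show H*(G*(H*(Gᴴ*(H*P)))) = (H*(G*(H*Gᴴ)))*(H*P) by noncomm_ring,
      Matrix.trace_mul_comm]
    simp only [mul_assoc, hPH', hPH, hPP', hPproj]
  have f1 : trace (H*(P*(Gᴴ*(H*(H*(G*P)))))) = trace (H*(H*(G*(H*(P*Gᴴ))))) := by
    rw [show H*(P*(Gᴴ*(H*(H*(G*P))))) = (H*(P*Gᴴ))*(H*(H*(G*P))) by noncomm_ring,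
      Matrix.trace_mul_comm]
    simp only [mul_assoc, hPH', hPH, hPP', hPproj]
  have f2 : trace (H*(P*(Gᴴ*(H*(H*(P*(G*P))))))) = trace (H*(H*(P*(G*(H*(P*Gᴴ)))))) := by
    rw [show H*(P*(Gᴴ*(H*(H*(P*(G*P)))))) = (H*(P*Gᴴ))*(H*(H*(P*(G*P)))) by noncomm_ring,
      Matrix.trace_mul_comm]
    simp only [mul_assoc, hPH', hPH, hPP', hPproj]
  have f5 : trace (H*(G*(H*(H*(P*(Gᴴ*P)))))) = trace (H*(P*(G*(H*(H*(P*Gᴴ)))))) := by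
    rw [show H*(G*(H*(H*(P*(Gᴴ*P))))) = (H*(G*(H*(H*(P*Gᴴ)))))*P by noncomm_ring,
      Matrix.trace_mul_comm]
    simp only [mul_assoc, hPH', hPH, hPP', hPproj]
  have f6 : trace (H*(P*(G*(H*(H*(P*(Gᴴ*P))))))) = trace (H*(P*(G*(H*(H*(P*Gᴴ)))))) := by
    rw [show H*(P*(G*(H*(H*(P*(Gᴴ*P)))))) = (H*(P*(G*(H*(H*(P*Gᴴ))))))*P by noncomm_ring,
      Matrix.trace_mul_comm]
    simp only [mul_assoc, hPH', hPH, hPP', hPproj]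
  have f7 : trace (H*(P*(G*(H*(H*(Gᴴ*P)))))) = trace (H*(P*(G*(H*(H*Gᴴ))))) := by
    rw [show H*(P*(G*(H*(H*(Gᴴ*P))))) = (H*(P*(G*(H*(H*Gᴴ)))))*P by noncomm_ring,
      Matrix.trace_mul_comm]
    simp only [mul_assoc, hPH', hPH, hPP', hPproj]
  have f9 : trace (H*(Gᴴ*(H*(H*(P*G))))) = trace (H*(H*(P*(G*(H*Gᴴ))))) := by
    rw [show H*(Gᴴ*(H*(H*(P*G)))) = (H*Gᴴ)*(H*(H*(P*G))) by noncomm_ring,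
      Matrix.trace_mul_comm]
    simp only [mul_assoc, hPH', hPH, hPP', hPproj]
  have f10 : trace (H*(P*(Gᴴ*(H*(H*(P*G)))))) = trace (H*(H*(P*(G*(H*(P*Gᴴ)))))) := by
    rw [show H*(P*(Gᴴ*(H*(H*(P*G))))) = (H*(P*Gᴴ))*(H*(H*(P*G))) by noncomm_ring,
      Matrix.trace_mul_comm]
    simp only [mul_assoc, hPH', hPH, hPP', hPproj]
  have f11 : trace (H*(Gᴴ*(H*(H*(P*(G*P)))))) = trace (H*(H*(P*(G*(H*(P*Gᴴ)))))) := by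
    rw [show H*(Gᴴ*(H*(H*(P*(G*P))))) = (H*Gᴴ)*(H*(H*(P*(G*P)))) by noncomm_ring,
      Matrix.trace_mul_comm]
    simp only [mul_assoc, hPH', hPH, hPP', hPproj]
  simp only [e1, e2, e3, e4, e5, e6, e7, e8, f1, f2, f5, f6, f7, f9, f10, f11]
  ring
end

section
/- Under the assumptions of the general trace identity (Hermitian $H$, spectral projector $P$ commuting with $H$, arbitrary $G$, $A=(1-P)GP$, $B=PG(1-P)$), one has $\mathrm{tr}\big((G^*[H,G]+G[H,G^*])P\big)=\mathrm{tr}\big((z-H)[A^*,A]\big)+\mathrm{tr}\big((z-H)[B,B^*]\big)$ for every real $z$. -/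
open scoped Matrix
open Matrix

/-- under the assumptions of the general trace identity,
`tr((G*[H,G]+G[H,G*])P) = tr((z-H)[A*,A]) + tr((z-H)[B,B*])` for every real `z`. -/
theorem stmt_4 (n : ℕ) (H P G : Matrix (Fin n) (Fin n) ℂ)
    (hH : Hᴴ = H) (hPproj : P * P = P) (hPherm : Pᴴ = P) (hPH : P * H = H * P)
    (A B : Matrix (Fin n) (Fin n) ℂ)
    (hA : A = (1 - P) * G * P) (hB : B = P * G * (1 - P)) (z : ℝ) :
    trace ((Gᴴ * opComm H G + G * opComm H Gᴴ) * P)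
    = trace (((z : ℂ) • (1 : Matrix (Fin n) (Fin n) ℂ) - H) * opComm Aᴴ A)
      + trace (((z : ℂ) • (1 : Matrix (Fin n) (Fin n) ℂ) - H) * opComm B Bᴴ) := by
  subst hA hB
  have hPP : ∀ X : Matrix (Fin n) (Fin n) ℂ, P * (P * X) = P * X := fun X => by
    rw [← Matrix.mul_assoc, hPproj]
  have hPH' : ∀ X : Matrix (Fin n) (Fin n) ℂ, P * (H * X) = H * (P * X) := fun X => by
    rw [← Matrix.mul_assoc, hPH, Matrix.mul_assoc]
  simp only [opComm, conjTranspose_mul, conjTranspose_sub, conjTranspose_one, hPherm,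
    mul_sub, sub_mul, mul_add, add_mul, one_mul, mul_one, smul_mul_assoc, Matrix.mul_assoc,
    hPP, trace_sub, trace_add, trace_smul]
  -- z-atoms
  have a1 : (P * (Gᴴ * (G * P))).trace = (G * (P * Gᴴ)).trace := by
    simpa [Matrix.mul_assoc, hPP, hPproj] using trace_mul_comm (P * Gᴴ) (G * P)
  have a2 : (P * (Gᴴ * (P * (G * P)))).trace = (G * (P * (Gᴴ * P))).trace := by
    simpa [Matrix.mul_assoc, hPP, hPproj] using trace_mul_comm (P * Gᴴ * P) (G * P)
  have a4 : (P * (G * (P * Gᴴ))).trace = (G * (P * (Gᴴ * P))).trace := by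
    simpa [Matrix.mul_assoc, hPP, hPproj] using trace_mul_comm P (G * P * Gᴴ)
  have a6 : (P * (G * (P * (Gᴴ * P)))).trace = (G * (P * (Gᴴ * P))).trace := by
    simpa [Matrix.mul_assoc, hPP, hPproj] using trace_mul_comm P (G * P * Gᴴ * P)
  have a7 : (P * (G * (Gᴴ * P))).trace = (G * (Gᴴ * P)).trace := by
    simpa [Matrix.mul_assoc, hPP, hPproj] using trace_mul_comm P (G * Gᴴ * P)
  have a9 : (Gᴴ * (P * G)).trace = (G * (Gᴴ * P)).trace := by
    simpa [Matrix.mul_assoc] using trace_mul_comm (Gᴴ * P) G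
  have a10 : (P * (Gᴴ * (P * G))).trace = (G * (P * (Gᴴ * P))).trace := by
    simpa [Matrix.mul_assoc] using trace_mul_comm (P * Gᴴ * P) G
  have a11 : (Gᴴ * (P * (G * P))).trace = (G * (P * (Gᴴ * P))).trace := by
    rw [← a10]; simpa [Matrix.mul_assoc] using trace_mul_comm (Gᴴ * (P * G)) P
  -- H-atoms
  have b1 : (H * (P * (Gᴴ * (G * P)))).trace = (H * (P * (Gᴴ * G))).trace := by
    simpa [Matrix.mul_assoc, hPP, hPH'] using trace_mul_comm (H * P * Gᴴ * G) P
  have b2 : (H * (P * (Gᴴ * (P * (G * P))))).trace = (H * (P * (Gᴴ * (P * G)))).trace := by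
    simpa [Matrix.mul_assoc, hPP, hPH'] using trace_mul_comm (H * P * Gᴴ * P * G) P
  have b5 : (H * (G * (P * (Gᴴ * P)))).trace = (H * (P * (G * (P * Gᴴ)))).trace := by
    simpa [Matrix.mul_assoc, hPP, hPH'] using trace_mul_comm (H * G * P * Gᴴ) P
  have b6 : (H * (P * (G * (P * (Gᴴ * P))))).trace = (H * (P * (G * (P * Gᴴ)))).trace := by
    simpa [Matrix.mul_assoc, hPP, hPH'] using trace_mul_comm (H * P * G * P * Gᴴ) P
  have b7 : (H * (P * (G * (Gᴴ * P)))).trace = (H * (P * (G * Gᴴ))).trace := by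
    simpa [Matrix.mul_assoc, hPP, hPH'] using trace_mul_comm (H * P * G * Gᴴ) P
  have b11 : (H * (Gᴴ * (P * (G * P)))).trace = (H * (P * (Gᴴ * (P * G)))).trace := by
    simpa [Matrix.mul_assoc, hPP, hPH'] using trace_mul_comm (H * Gᴴ * P * G) P
  -- LHS atoms
  have l1 : (Gᴴ * (H * (G * P))).trace = (H * (G * (P * Gᴴ))).trace := by
    simpa [Matrix.mul_assoc] using trace_mul_comm Gᴴ (H * (G * P))
  have l2 : (Gᴴ * (G * (H * P))).trace = (H * (P * (Gᴴ * G))).trace := by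
    simpa [Matrix.mul_assoc] using trace_mul_comm (Gᴴ * G) (H * P)
  have l3 : (G * (H * (Gᴴ * P))).trace = (H * (Gᴴ * (P * G))).trace := by
    simpa [Matrix.mul_assoc] using trace_mul_comm G (H * (Gᴴ * P))
  have l4 : (G * (Gᴴ * (H * P))).trace = (H * (P * (G * Gᴴ))).trace := by
    simpa [Matrix.mul_assoc] using trace_mul_comm (G * Gᴴ) (H * P)
  rw [a1, a2, a4, a6, a7, a9, a10, a11, b1, b2, b5, b6, b7, b11, l1, l2, l3, l4]
  ring
end

section
/- Let $H$ be Hermitian, $P$ a spectral projector of $H$ with $HP\le\lambda P$ and $H(1-P)\ge\Lambda(1-P)$ for constants $\lambda<\Lambda$, and $G$ any matrix. Then for all $z\in[\lambda,\Lambda]$: $\mathrm{tr}\big((z-H)^2(G^*[H,G]+G[H,G^*])P\big)+\mathrm{tr}\big((z-H)([H,G^*][H,G]+[H,G][H,G^*])P\big)\le(z-\lambda)(z-\Lambda)\,\mathrm{tr}\big((G^*[H,G]+G[H,G^*])P\big)$. -/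
open scoped Matrix ComplexOrder
open Matrix

variable {n : ℕ}

private lemma trace_sq_nonneg (C : Matrix (Fin n) (Fin n) ℂ) : 0 ≤ (trace (Cᴴ * C)).re := by
  rw [Matrix.trace]
  simp only [Matrix.diag_apply, Matrix.mul_apply, Matrix.conjTranspose_apply]
  rw [Complex.re_sum]
  refine Finset.sum_nonneg fun i _ => ?_
  rw [Complex.re_sum]
  refine Finset.sum_nonneg fun j _ => ?_
  rw [Complex.star_def, ← Complex.normSq_eq_conj_mul_self, Complex.ofReal_re]
  exact Complex.normSq_nonneg _

private lemma trace_quad_nonneg {M N : Matrix (Fin n) (Fin n) ℂ} (X : Matrix (Fin n) (Fin n) ℂ)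
    (hM : M.PosSemidef) (hN : N.PosSemidef) : 0 ≤ (trace (M * (Xᴴ * (N * X)))).re := by
  obtain ⟨M1, rfl⟩ : ∃ M1 : Matrix (Fin n) (Fin n) ℂ, M = M1ᴴ * M1 := by
    open scoped MatrixOrder Matrix.Norms.L2Operator in
      exact CStarAlgebra.nonneg_iff_eq_star_mul_self.mp hM.nonneg
  obtain ⟨N1, rfl⟩ : ∃ N1 : Matrix (Fin n) (Fin n) ℂ, N = N1ᴴ * N1 := by
    open scoped MatrixOrder Matrix.Norms.L2Operator in
      exact CStarAlgebra.nonneg_iff_eq_star_mul_self.mp hN.nonneg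
  have h : M1ᴴ * M1 * (Xᴴ * (N1ᴴ * N1 * X)) = M1ᴴ * (M1 * (Xᴴ * (N1ᴴ * (N1 * X)))) := by
    noncomm_ring
  rw [h, trace_mul_comm]
  have h2 : M1 * (Xᴴ * (N1ᴴ * (N1 * X))) * M1ᴴ = (N1 * (X * M1ᴴ))ᴴ * (N1 * (X * M1ᴴ)) := by
    simp only [conjTranspose_mul, conjTranspose_conjTranspose]
    noncomm_ring
  rw [h2]
  exact trace_sq_nonneg _

private lemma trace_quad_nonneg' {M : Matrix (Fin n) (Fin n) ℂ} (X : Matrix (Fin n) (Fin n) ℂ)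
    (hM : M.PosSemidef) : 0 ≤ (trace (M * (Xᴴ * X))).re := by
  have := trace_quad_nonneg X hM (Matrix.PosSemidef.one (n := Fin n) (R := ℂ))
  simpa using this

private lemma trace_quad_nonneg'' {N : Matrix (Fin n) (Fin n) ℂ} (X : Matrix (Fin n) (Fin n) ℂ)
    (hN : N.PosSemidef) : 0 ≤ (trace (Xᴴ * (N * X))).re := by
  have := trace_quad_nonneg X (Matrix.PosSemidef.one (n := Fin n) (R := ℂ)) hN
  simpa using this



set_option maxHeartbeats 3200000 in
/-- the gap inequality.  `H` Hermitian, `P` an orthogonal projection commuting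
with `H`, with `HP ≤ λP` and `H(1-P) ≥ Λ(1-P)` for constants `λ < Λ`; `G` arbitrary.
For all `z ∈ [λ, Λ]`:
`tr((z-H)²(G*[H,G]+G[H,G*])P) + tr((z-H)([H,G*][H,G]+[H,G][H,G*])P)
  ≤ (z-λ)(z-Λ) tr((G*[H,G]+G[H,G*])P)`. -/
theorem stmt_5 (n : ℕ) (H P G : Matrix (Fin n) (Fin n) ℂ)
    (hH : Hᴴ = H) (hPproj : P * P = P) (hPherm : Pᴴ = P) (hPH : P * H = H * P)
    (lam Lam : ℝ) (hgap : lam < Lam)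
    (hbelow : ((lam : ℂ) • P - H * P).PosSemidef)
    (habove : (H * (1 - P) - (Lam : ℂ) • (1 - P)).PosSemidef)
    (z : ℝ) (hz : z ∈ Set.Icc lam Lam) :
    (trace (((z : ℂ) • (1 : Matrix (Fin n) (Fin n) ℂ) - H)^2
        * (Gᴴ * opComm H G + G * opComm H Gᴴ) * P)).re
      + (trace (((z : ℂ) • (1 : Matrix (Fin n) (Fin n) ℂ) - H)
        * (opComm H Gᴴ * opComm H G + opComm H G * opComm H Gᴴ) * P)).re
    ≤ (z - lam) * (z - Lam) * (trace ((Gᴴ * opComm H G + G * opComm H Gᴴ) * P)).re := by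
  obtain ⟨hz1, hz2⟩ := hz
  set K : Matrix (Fin n) (Fin n) ℂ := (z : ℂ) • 1 - H with hKdef
  set Q : Matrix (Fin n) (Fin n) ℂ := 1 - P with hQdef
  set A : Matrix (Fin n) (Fin n) ℂ := H * G - G * H with hAdef
  -- basic relations
  have hQherm : Qᴴ = Q := by rw [hQdef]; simp [conjTranspose_sub, hPherm]
  have hQQ : Q * Q = Q := by rw [hQdef]; simp [sub_mul, mul_sub, hPproj]
  have hQH : Q * H = H * Q := by rw [hQdef]; simp [sub_mul, mul_sub, hPH]
  have hPK : P * K = K * P := by rw [hKdef]; simp [sub_mul, mul_sub, smul_mul_assoc, mul_smul_comm, hPH]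
  have hQK : Q * K = K * Q := by rw [hKdef]; simp [sub_mul, mul_sub, smul_mul_assoc, mul_smul_comm, hQH]
  have hKH : Kᴴ = K := by
    rw [hKdef]; simp [conjTranspose_sub, conjTranspose_smul, hH, Complex.star_def,
      Complex.conj_ofReal]
  have hAK : A = G * K - K * G := by
    rw [hAdef, hKdef]
    simp [sub_mul, mul_sub, smul_mul_assoc, mul_smul_comm]
  have hAdag : Aᴴ = K * Gᴴ - Gᴴ * K := by
    rw [hAK]; simp [conjTranspose_sub, conjTranspose_mul, hKH]
  have hA' : opComm H Gᴴ = -Aᴴ := by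
    rw [hAdef]
    simp [opComm, conjTranspose_sub, conjTranspose_mul, hH]
  set R : Matrix (Fin n) (Fin n) ℂ := Q * G * P with hRdef
  set S : Matrix (Fin n) (Fin n) ℂ := P * G * Q with hSdef
  set D : Matrix (Fin n) (Fin n) ℂ := (lam : ℂ) • P - H * P with hDdef
  set E : Matrix (Fin n) (Fin n) ℂ := H * Q - (Lam : ℂ) • Q with hEdef
  have hRdag : Rᴴ = P * (Gᴴ * Q) := by
    rw [hRdef]; simp [conjTranspose_mul, hPherm, hQherm, mul_assoc]
  have hSdag : Sᴴ = Q * (Gᴴ * P) := by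
    rw [hSdef]; simp [conjTranspose_mul, hPherm, hQherm, mul_assoc]
  -- absorption lemmas
  have hPQ : P * Q = 0 := by rw [hQdef]; simp [mul_sub, hPproj]
  have hQP : Q * P = 0 := by rw [hQdef]; simp [sub_mul, hPproj]
  have hPD : P * D = D := by
    rw [hDdef, mul_sub, mul_smul_comm, hPproj, ← mul_assoc, hPH, mul_assoc, hPproj]
  have hDP : D * P = D := by
    rw [hDdef, sub_mul, smul_mul_assoc, hPproj, mul_assoc, hPproj]
  have hQE : Q * E = E := by
    rw [hEdef, mul_sub, mul_smul_comm, hQQ, ← mul_assoc, hQH, mul_assoc, hQQ]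
  have hEQ : E * Q = E := by
    rw [hEdef, sub_mul, smul_mul_assoc, hQQ, mul_assoc, hQQ]
  have hPRd : P * Rᴴ = Rᴴ := by rw [hRdag, ← mul_assoc, hPproj]
  have hRdQ : Rᴴ * Q = Rᴴ := by rw [hRdag, mul_assoc, mul_assoc, hQQ]
  have hQR : Q * R = R := by rw [hRdef, ← mul_assoc, ← mul_assoc, hQQ]
  have hRP : R * P = R := by rw [hRdef, mul_assoc, hPproj]
  have hPS : P * S = S := by rw [hSdef, ← mul_assoc, ← mul_assoc, hPproj]
  have hSQ : S * Q = S := by rw [hSdef, mul_assoc, hQQ]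
  have hQSd : Q * Sᴴ = Sᴴ := by rw [hSdag, ← mul_assoc, hQQ]
  have hSdP : Sᴴ * P = Sᴴ := by rw [hSdag, mul_assoc, mul_assoc, hPproj]
  -- PSD facts
  have hDpsd : D.PosSemidef := hbelow
  have hEpsd : E.PosSemidef := habove
  have hDDpsd : (D * D).PosSemidef := by
    have := posSemidef_conjTranspose_mul_self D
    rwa [hDpsd.1.eq] at this
  have hEEpsd : (E * E).PosSemidef := by
    have := posSemidef_conjTranspose_mul_self E
    rwa [hEpsd.1.eq] at this
  -- split lemmas
  have hKPs : K * P = ((z - lam : ℝ) : ℂ) • P + D := by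
    rw [hKdef, hDdef]
    push_cast
    simp [sub_mul, smul_mul_assoc, sub_smul]
  have hKQs : K * Q = -(((Lam - z : ℝ) : ℂ) • Q + E) := by
    rw [hKdef, hEdef]
    push_cast
    simp [sub_mul, smul_mul_assoc, sub_smul]
  -- rotation helper lemmas
  have e1 : trace (K*(K*(Gᴴ*(G*(K*P))))) = trace (K*(K*(K*(Gᴴ*(G*P))))) := by
    conv_lhs => rw [← hPK]
    rw [show K*(K*(Gᴴ*(G*(P*K)))) = (K*(K*(Gᴴ*(G*P))))*K from by simp only [mul_assoc],
      trace_mul_comm]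
  have e2 : trace (K*(Gᴴ*(K*(G*(K*P))))) = trace (K*(K*(Gᴴ*(K*(G*P))))) := by
    conv_lhs => rw [← hPK]
    rw [show K*(Gᴴ*(K*(G*(P*K)))) = (K*(Gᴴ*(K*(G*P))))*K from by simp only [mul_assoc],
      trace_mul_comm]
  have e3 : trace (K*(G*(K*(Gᴴ*(K*P))))) = trace (K*(K*(G*(K*(Gᴴ*P))))) := by
    conv_lhs => rw [← hPK]
    rw [show K*(G*(K*(Gᴴ*(P*K)))) = (K*(G*(K*(Gᴴ*P))))*K from by simp only [mul_assoc],
      trace_mul_comm]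
  have e4 : trace (K*(K*(G*(Gᴴ*(K*P))))) = trace (K*(K*(K*(G*(Gᴴ*P))))) := by
    conv_lhs => rw [← hPK]
    rw [show K*(K*(G*(Gᴴ*(P*K)))) = (K*(K*(G*(Gᴴ*P))))*K from by simp only [mul_assoc],
      trace_mul_comm]
  have I1 : trace (K*K*(Gᴴ*A - G*Aᴴ)*P) + trace (K*(-(Aᴴ*A) - A*Aᴴ)*P)
      = trace (K*Aᴴ*(K*(G*P))) - trace (K*A*(K*(Gᴴ*P))) := by
    rw [hAdag, hAK]
    simp only [mul_sub, sub_mul, mul_add, add_mul, mul_neg, neg_mul, trace_sub, trace_add,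
      trace_neg, mul_assoc]
    rw [e1, e2, e3, e4]
    ring
  have hPKr : ∀ X : Matrix (Fin n) (Fin n) ℂ, P*(K*X) = K*(P*X) := fun X => by
    rw [← mul_assoc, hPK, mul_assoc]
  have hPPr : ∀ X : Matrix (Fin n) (Fin n) ℂ, P*(P*X) = P*X := fun X => by
    rw [← mul_assoc, hPproj]
  have I2a : trace (K*Aᴴ*(K*(G*P))) = trace ((K*P)*((P*(Aᴴ*P))*((K*P)*(P*(G*P)))))
      + trace ((K*P)*((P*(Aᴴ*Q))*((K*Q)*R))) := by
    have hw : K*Aᴴ*(K*(G*P)) = (K*(Aᴴ*(K*G)))*P := by simp only [mul_assoc]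
    rw [hw, ← hPproj, ← mul_assoc, trace_mul_comm]
    have hm : P*((K*(Aᴴ*(K*G)))*P) = (K*P)*((P*(Aᴴ*P))*((K*P)*(P*(G*P))))
        + (K*P)*((P*(Aᴴ*Q))*((K*Q)*R)) := by
      rw [hRdef, hQdef]
      simp only [mul_sub, sub_mul, mul_add, add_mul, mul_one, one_mul, mul_assoc, hPKr, hPPr,
        hPK, hPproj]
      abel
    rw [hm, trace_add]
    simp only [hPproj]
  have I2b : trace (K*A*(K*(Gᴴ*P))) = trace ((K*P)*((P*(A*P))*((K*P)*(P*(Gᴴ*P)))))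
      + trace ((K*P)*((P*(A*Q))*((K*Q)*Sᴴ))) := by
    have hw : K*A*(K*(Gᴴ*P)) = (K*(A*(K*Gᴴ)))*P := by simp only [mul_assoc]
    rw [hw, ← hPproj, ← mul_assoc, trace_mul_comm]
    have hm : P*((K*(A*(K*Gᴴ)))*P) = (K*P)*((P*(A*P))*((K*P)*(P*(Gᴴ*P))))
        + (K*P)*((P*(A*Q))*((K*Q)*Sᴴ)) := by
      rw [hSdag, hQdef]
      simp only [mul_sub, sub_mul, mul_add, add_mul, mul_one, one_mul, mul_assoc, hPKr, hPPr,
        hPK, hPproj]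
      abel
    rw [hm, trace_add]
    simp only [hPproj]
  have wrap : ∀ X : Matrix (Fin n) (Fin n) ℂ, trace (X*P) = trace (P*(X*P)) := fun X => by
    conv_lhs => rw [← hPproj, ← mul_assoc]
    rw [trace_mul_comm]
  have hB : Q*(A*P) = R*(K*P) - (K*Q)*R := by
    rw [hAK, hRdef, hQdef]
    simp only [mul_sub, sub_mul, mul_add, add_mul, mul_one, one_mul, mul_assoc, hPKr, hPPr,
      hPK, hPproj]
    abel
  have hC : P*(A*Q) = S*(K*Q) - (K*P)*S := by
    rw [hAK, hSdef, hQdef]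
    simp only [mul_sub, sub_mul, mul_add, add_mul, mul_one, one_mul, mul_assoc, hPKr, hPPr,
      hPK, hPproj]
    abel
  have hBdag : P*(Aᴴ*Q) = (K*P)*Rᴴ - Rᴴ*(K*Q) := by
    rw [hAdag, hRdag, hQdef]
    simp only [mul_sub, sub_mul, mul_add, add_mul, mul_one, one_mul, mul_assoc, hPKr, hPPr,
      hPK, hPproj]
    abel
  have hCdag : Q*(Aᴴ*P) = (K*Q)*Sᴴ - Sᴴ*(K*P) := by
    rw [hAdag, hSdag, hQdef]
    simp only [mul_sub, sub_mul, mul_add, add_mul, mul_one, one_mul, mul_assoc, hPKr, hPPr,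
      hPK, hPproj]
    abel
  have I4a : trace ((K*P)*((P*(Aᴴ*Q))*((K*Q)*R)))
      = trace ((K*P)*((K*P)*(Rᴴ*((K*Q)*R)))) - trace ((K*P)*(Rᴴ*((K*Q)*((K*Q)*R)))) := by
    rw [hBdag]
    simp only [sub_mul, mul_sub, trace_sub, mul_assoc]
  have I4b : trace ((K*P)*((P*(A*Q))*((K*Q)*Sᴴ)))
      = trace ((K*P)*(S*((K*Q)*((K*Q)*Sᴴ)))) - trace ((K*P)*((K*P)*(S*((K*Q)*Sᴴ)))) := by
    rw [hC]
    simp only [sub_mul, mul_sub, trace_sub, mul_assoc]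
  have I3a : trace ((Gᴴ*A)*P) = trace ((P*(Gᴴ*P))*(P*(A*P)))
      + (trace (Rᴴ*(R*(K*P))) - trace (Rᴴ*((K*Q)*R))) := by
    rw [wrap]
    have hm : P*((Gᴴ*A)*P) = (P*(Gᴴ*P))*(P*(A*P)) + Rᴴ*(Q*(A*P)) := by
      rw [hRdag, hQdef]
      simp only [mul_sub, sub_mul, mul_add, add_mul, mul_one, one_mul, mul_assoc, hPKr, hPPr,
        hPK, hPproj]
      abel
    rw [hm, trace_add, hB]
    simp only [mul_sub, trace_sub, mul_assoc]
  have I3b : trace ((G*Aᴴ)*P) = trace ((P*(G*P))*(P*(Aᴴ*P)))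
      + (trace (S*((K*Q)*Sᴴ)) - trace (S*(Sᴴ*(K*P)))) := by
    rw [wrap]
    have hm : P*((G*Aᴴ)*P) = (P*(G*P))*(P*(Aᴴ*P)) + S*(Q*(Aᴴ*P)) := by
      rw [hSdef, hQdef]
      simp only [mul_sub, sub_mul, mul_add, add_mul, mul_one, one_mul, mul_assoc, hPKr, hPPr,
        hPK, hPproj]
      abel
    rw [hm, trace_add, hCdag]
    simp only [mul_sub, trace_sub, mul_assoc]
  have st1 : trace ((K*P)*((P*(A*P))*((K*P)*(P*(Gᴴ*P)))))
      = star (trace ((K*P)*((P*(Aᴴ*P))*((K*P)*(P*(G*P)))))) := by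
    rw [← trace_conjTranspose]
    have hXd : ((K*P)*((P*(Aᴴ*P))*((K*P)*(P*(G*P)))))ᴴ
        = (P*(Gᴴ*P))*((K*P)*((P*(A*P))*(K*P))) := by
      simp only [conjTranspose_mul, conjTranspose_conjTranspose, hPherm, hKH]
      simp only [mul_assoc, hPKr, hPPr, hPK, hPproj]
    rw [hXd]
    conv_rhs => rw [trace_mul_comm]
    congr 1
    simp only [mul_assoc]
  have st2 : trace ((P*(G*P))*(P*(Aᴴ*P))) = star (trace ((P*(Gᴴ*P))*(P*(A*P)))) := by
    rw [← trace_conjTranspose]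
    have hXd : ((P*(Gᴴ*P))*(P*(A*P)))ᴴ = (P*(Aᴴ*P))*(P*(G*P)) := by
      simp only [conjTranspose_mul, conjTranspose_conjTranspose, hPherm]
      simp only [mul_assoc, hPPr, hPproj]
    rw [hXd]
    conv_rhs => rw [trace_mul_comm]
  have rotR : trace (Rᴴ*(R*(K*P))) = trace ((K*P)*(Rᴴ*R)) := by
    rw [show Rᴴ*(R*(K*P)) = (Rᴴ*R)*(K*P) from by simp only [mul_assoc], trace_mul_comm]
  have rotS : trace (S*(Sᴴ*(K*P))) = trace ((K*P)*(S*Sᴴ)) := by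
    rw [show S*(Sᴴ*(K*P)) = (S*Sᴴ)*(K*P) from by simp only [mul_assoc], trace_mul_comm]
  set ca : ℝ := z - lam with hcadef
  set cb : ℝ := Lam - z with hcbdef
  have hca' : (0:ℝ) ≤ ca := by rw [hcadef]; linarith
  have hcb' : (0:ℝ) ≤ cb := by rw [hcbdef]; linarith
  -- more applied absorption lemmas
  have hPRdr : ∀ X : Matrix (Fin n) (Fin n) ℂ, P*(Rᴴ*X) = Rᴴ*X := fun X => by
    rw [← mul_assoc, hPRd]
  have hPDr : ∀ X : Matrix (Fin n) (Fin n) ℂ, P*(D*X) = D*X := fun X => by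
    rw [← mul_assoc, hPD]
  have hDPr : ∀ X : Matrix (Fin n) (Fin n) ℂ, D*(P*X) = D*X := fun X => by
    rw [← mul_assoc, hDP]
  have hQQr : ∀ X : Matrix (Fin n) (Fin n) ℂ, Q*(Q*X) = Q*X := fun X => by
    rw [← mul_assoc, hQQ]
  have hQEr : ∀ X : Matrix (Fin n) (Fin n) ℂ, Q*(E*X) = E*X := fun X => by
    rw [← mul_assoc, hQE]
  have hEQr : ∀ X : Matrix (Fin n) (Fin n) ℂ, E*(Q*X) = E*X := fun X => by
    rw [← mul_assoc, hEQ]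
  have hRdQr : ∀ X : Matrix (Fin n) (Fin n) ℂ, Rᴴ*(Q*X) = Rᴴ*X := fun X => by
    rw [← mul_assoc, hRdQ]
  have hQRr : ∀ X : Matrix (Fin n) (Fin n) ℂ, Q*(R*X) = R*X := fun X => by
    rw [← mul_assoc, hQR]
  have hPSr : ∀ X : Matrix (Fin n) (Fin n) ℂ, P*(S*X) = S*X := fun X => by
    rw [← mul_assoc, hPS]
  have hSQr : ∀ X : Matrix (Fin n) (Fin n) ℂ, S*(Q*X) = S*X := fun X => by
    rw [← mul_assoc, hSQ]
  have hQSdr : ∀ X : Matrix (Fin n) (Fin n) ℂ, Q*(Sᴴ*X) = Sᴴ*X := fun X => by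
    rw [← mul_assoc, hQSd]
  have MR : ((ca:ℂ)*(cb:ℂ)) • (Rᴴ*((K*Q)*R)) - ((ca:ℂ)*(cb:ℂ)) • ((K*P)*(Rᴴ*R))
      - (K*P)*((K*P)*(Rᴴ*((K*Q)*R))) + (K*P)*(Rᴴ*((K*Q)*((K*Q)*R)))
      = ((ca:ℂ)*(ca:ℂ) + (ca:ℂ)*(cb:ℂ)) • (Rᴴ*(E*R))
        + ((ca:ℂ)*(cb:ℂ) + (cb:ℂ)*(cb:ℂ)) • (D*(Rᴴ*R))
        + (cb:ℂ) • ((D*D)*(Rᴴ*R)) + (D*D)*(Rᴴ*(E*R))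
        + (2*(ca:ℂ) + 2*(cb:ℂ)) • (D*(Rᴴ*(E*R)))
        + D*(Rᴴ*((E*E)*R)) + (ca:ℂ) • (Rᴴ*((E*E)*R)) := by
    rw [hKPs, hKQs]
    simp only [mul_add, add_mul, mul_sub, sub_mul, smul_mul_assoc, mul_smul_comm, smul_smul,
      smul_add, smul_sub, smul_neg, neg_mul, mul_neg, neg_neg, neg_add, mul_assoc,
      hPPr, hPRdr, hPDr, hDPr, hQQr, hQEr, hEQr, hRdQr, hQRr,
      hPproj, hQQ, hPD, hDP, hQE, hEQ, hPRd, hRdQ, hQR]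
    module
  have MS : ((ca:ℂ)*(cb:ℂ)) • (S*((K*Q)*Sᴴ)) - ((ca:ℂ)*(cb:ℂ)) • ((K*P)*(S*Sᴴ))
      - (K*P)*((K*P)*(S*((K*Q)*Sᴴ))) + (K*P)*(S*((K*Q)*((K*Q)*Sᴴ)))
      = ((ca:ℂ)*(ca:ℂ) + (ca:ℂ)*(cb:ℂ)) • (S*(E*Sᴴ))
        + ((ca:ℂ)*(cb:ℂ) + (cb:ℂ)*(cb:ℂ)) • (D*(S*Sᴴ))
        + (cb:ℂ) • ((D*D)*(S*Sᴴ)) + (D*D)*(S*(E*Sᴴ))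
        + (2*(ca:ℂ) + 2*(cb:ℂ)) • (D*(S*(E*Sᴴ)))
        + D*(S*((E*E)*Sᴴ)) + (ca:ℂ) • (S*((E*E)*Sᴴ)) := by
    rw [hKPs, hKQs]
    simp only [mul_add, add_mul, mul_sub, sub_mul, smul_mul_assoc, mul_smul_comm, smul_smul,
      smul_add, smul_sub, smul_neg, neg_mul, mul_neg, neg_neg, neg_add, mul_assoc,
      hPPr, hPSr, hPDr, hDPr, hQQr, hQEr, hEQr, hSQr, hQSdr,
      hPproj, hQQ, hPD, hDP, hQE, hEQ, hPS, hSQ, hQSd]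
    module
  -- positivity of decomposition terms
  have p1 := trace_quad_nonneg'' R hEpsd
  have p2 := trace_quad_nonneg' R hDpsd
  have p3 := trace_quad_nonneg' R hDDpsd
  have p4 := trace_quad_nonneg R hDDpsd hEpsd
  have p5 := trace_quad_nonneg R hDpsd hEpsd
  have p6 := trace_quad_nonneg R hDpsd hEEpsd
  have p7 := trace_quad_nonneg'' R hEEpsd
  have q1 : 0 ≤ (trace (S*(E*Sᴴ))).re := by
    have := trace_quad_nonneg'' Sᴴ hEpsd; rwa [conjTranspose_conjTranspose] at this
  have q2 : 0 ≤ (trace (D*(S*Sᴴ))).re := by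
    have := trace_quad_nonneg' Sᴴ hDpsd; rwa [conjTranspose_conjTranspose] at this
  have q3 : 0 ≤ (trace ((D*D)*(S*Sᴴ))).re := by
    have := trace_quad_nonneg' Sᴴ hDDpsd; rwa [conjTranspose_conjTranspose] at this
  have q4 : 0 ≤ (trace ((D*D)*(S*(E*Sᴴ)))).re := by
    have := trace_quad_nonneg Sᴴ hDDpsd hEpsd; rwa [conjTranspose_conjTranspose] at this
  have q5 : 0 ≤ (trace (D*(S*(E*Sᴴ)))).re := by
    have := trace_quad_nonneg Sᴴ hDpsd hEpsd; rwa [conjTranspose_conjTranspose] at this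
  have q6 : 0 ≤ (trace (D*(S*((E*E)*Sᴴ)))).re := by
    have := trace_quad_nonneg Sᴴ hDpsd hEEpsd; rwa [conjTranspose_conjTranspose] at this
  have q7 : 0 ≤ (trace (S*((E*E)*Sᴴ))).re := by
    have := trace_quad_nonneg'' Sᴴ hEEpsd; rwa [conjTranspose_conjTranspose] at this
  have c1 : (0:ℝ) ≤ ca*ca + ca*cb :=
    add_nonneg (mul_nonneg hca' hca') (mul_nonneg hca' hcb')
  have c2 : (0:ℝ) ≤ ca*cb + cb*cb :=
    add_nonneg (mul_nonneg hca' hcb') (mul_nonneg hcb' hcb')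
  have c3 : (0:ℝ) ≤ 2*ca + 2*cb := by linarith
  have ineqR : 0 ≤ ca*cb*(trace (Rᴴ*((K*Q)*R))).re - ca*cb*(trace ((K*P)*(Rᴴ*R))).re
      - (trace ((K*P)*((K*P)*(Rᴴ*((K*Q)*R))))).re
      + (trace ((K*P)*(Rᴴ*((K*Q)*((K*Q)*R))))).re := by
    have h := congrArg (fun M => (trace M).re) MR
    simp only [trace_add, trace_sub, trace_smul, smul_eq_mul, Complex.add_re, Complex.sub_re,
      ← Complex.ofReal_mul, ← Complex.ofReal_add, ← Complex.ofReal_ofNat,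
      Complex.re_ofReal_mul] at h
    rw [h]
    exact add_nonneg (add_nonneg (add_nonneg (add_nonneg (add_nonneg (add_nonneg
      (mul_nonneg c1 p1) (mul_nonneg c2 p2)) (mul_nonneg hcb' p3)) p4)
      (mul_nonneg c3 p5)) p6) (mul_nonneg hca' p7)
  have ineqS : 0 ≤ ca*cb*(trace (S*((K*Q)*Sᴴ))).re - ca*cb*(trace ((K*P)*(S*Sᴴ))).re
      - (trace ((K*P)*((K*P)*(S*((K*Q)*Sᴴ))))).re
      + (trace ((K*P)*(S*((K*Q)*((K*Q)*Sᴴ))))).re := by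
    have h := congrArg (fun M => (trace M).re) MS
    simp only [trace_add, trace_sub, trace_smul, smul_eq_mul, Complex.add_re, Complex.sub_re,
      ← Complex.ofReal_mul, ← Complex.ofReal_add, ← Complex.ofReal_ofNat,
      Complex.re_ofReal_mul] at h
    rw [h]
    exact add_nonneg (add_nonneg (add_nonneg (add_nonneg (add_nonneg (add_nonneg
      (mul_nonneg c1 q1) (mul_nonneg c2 q2)) (mul_nonneg hcb' q3)) q4)
      (mul_nonneg c3 q5)) q6) (mul_nonneg hca' q7)
  -- assemble
  have hopA : opComm H G = A := by simp only [opComm, ← hAdef]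
  have hopW : Gᴴ * opComm H G + G * opComm H Gᴴ = Gᴴ*A - G*Aᴴ := by
    rw [hopA, hA']; simp only [mul_neg]; abel
  have hopV : opComm H Gᴴ * opComm H G + opComm H G * opComm H Gᴴ = -(Aᴴ*A) - A*Aᴴ := by
    rw [hopA, hA']; simp only [neg_mul, mul_neg]; abel
  rw [pow_two, hopW, hopV]
  have bigL : trace (K*K*(Gᴴ*A - G*Aᴴ)*P) + trace (K*(-(Aᴴ*A) - A*Aᴴ)*P)
      = (trace ((K*P)*((P*(Aᴴ*P))*((K*P)*(P*(G*P)))))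
          - star (trace ((K*P)*((P*(Aᴴ*P))*((K*P)*(P*(G*P)))))))
        + ((trace ((K*P)*((K*P)*(Rᴴ*((K*Q)*R)))) - trace ((K*P)*(Rᴴ*((K*Q)*((K*Q)*R)))))
          + (trace ((K*P)*((K*P)*(S*((K*Q)*Sᴴ)))) - trace ((K*P)*(S*((K*Q)*((K*Q)*Sᴴ)))))) := by
    rw [I1, I2a, I2b, I4a, I4b, st1]; ring
  have bigLre : (trace (K*K*(Gᴴ*A - G*Aᴴ)*P)).re + (trace (K*(-(Aᴴ*A) - A*Aᴴ)*P)).re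
      = (trace ((K*P)*((K*P)*(Rᴴ*((K*Q)*R))))).re - (trace ((K*P)*(Rᴴ*((K*Q)*((K*Q)*R))))).re
        + (trace ((K*P)*((K*P)*(S*((K*Q)*Sᴴ))))).re
        - (trace ((K*P)*(S*((K*Q)*((K*Q)*Sᴴ))))).re := by
    have h := congrArg Complex.re bigL
    simp only [Complex.add_re, Complex.sub_re, Complex.star_def, Complex.conj_re] at h
    linarith [h]
  have bigR : trace ((Gᴴ*A - G*Aᴴ)*P)
      = (trace ((P*(Gᴴ*P))*(P*(A*P))) - star (trace ((P*(Gᴴ*P))*(P*(A*P)))))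
        + ((trace ((K*P)*(Rᴴ*R)) - trace (Rᴴ*((K*Q)*R)))
          + (trace ((K*P)*(S*Sᴴ)) - trace (S*((K*Q)*Sᴴ)))) := by
    rw [sub_mul, trace_sub, I3a, I3b, st2, rotR, rotS]; ring
  have bigRre : (trace ((Gᴴ*A - G*Aᴴ)*P)).re
      = (trace ((K*P)*(Rᴴ*R))).re - (trace (Rᴴ*((K*Q)*R))).re
        + (trace ((K*P)*(S*Sᴴ))).re - (trace (S*((K*Q)*Sᴴ))).re := by
    have h := congrArg Complex.re bigR
    simp only [Complex.add_re, Complex.sub_re, Complex.star_def, Complex.conj_re] at h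
    linarith [h]
  have hzLam : z - Lam = -cb := by rw [hcbdef]; ring
  rw [bigLre, hzLam, bigRre]
  nlinarith [ineqR, ineqS]
end

section
/- Let $0\le\lambda_1\le\dots\le\lambda_N\le z$ be reals with $\overline{\lambda_N}=\tfrac1N\sum_j\lambda_j$, $\overline{\lambda_N^2}=\tfrac1N\sum_j\lambda_j^2$, and suppose the quadratic inequality $z^2-\big((2+\tfrac4d)\overline{\lambda_N}+\tau\big)z+(1+\tfrac4d)\overline{\lambda_N^2}+\tau\overline{\lambda_N}\le0$ holds for $z=\lambda_{N+1}$ where $\lambda_{N+1}\ge\lambda_N$ and $\tau\ge0$. Then $\lambda_{N+1}\le(1+\tfrac4d)\overline{\lambda_N}+\tau$. -/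
open Finset

/-- if `0 ≤ λ₁ ≤ … ≤ λ_N ≤ λ_{N+1}`, `τ ≥ 0`, and the quadratic inequality
`z² - ((2+4/d)λ̄_N + τ) z + (1+4/d)λ̄²_N + τ λ̄_N ≤ 0` holds at `z = λ_{N+1}`, then
`λ_{N+1} ≤ (1+4/d) λ̄_N + τ`. -/
theorem stmt_10 (d N : ℕ) (hd : 0 < d) (hN : 1 ≤ N) (τ : ℝ) (hτ : 0 ≤ τ)
    (lam : ℕ → ℝ) (hnonneg : 0 ≤ lam 1)
    (hmono : ∀ i j, 1 ≤ i → i ≤ j → j ≤ N + 1 → lam i ≤ lam j)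
    (lamBar lamSqBar : ℝ)
    (hBar : lamBar = (∑ j ∈ Icc 1 N, lam j) / N)
    (hSqBar : lamSqBar = (∑ j ∈ Icc 1 N, (lam j)^2) / N)
    (hquad : (lam (N+1))^2 - ((2 + 4/(d : ℝ)) * lamBar + τ) * lam (N+1)
        + (1 + 4/(d : ℝ)) * lamSqBar + τ * lamBar ≤ 0) :
    lam (N+1) ≤ (1 + 4/(d : ℝ)) * lamBar + τ := by
  by_contra hcon
  push_neg at hcon
  set z := lam (N+1) with hz
  have hNpos : (0:ℝ) < N := by exact_mod_cast hN
  have hc : (0:ℝ) ≤ 4 / (d:ℝ) := by positivity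
  -- card of Icc 1 N
  have hcard : (Icc 1 N).card = N := by simp [Nat.card_Icc]
  -- sum sq ≥ (sum)^2 / N
  have hCS : (∑ j ∈ Icc 1 N, lam j)^2 ≤ (N:ℝ) * ∑ j ∈ Icc 1 N, (lam j)^2 := by
    have := sq_sum_le_card_mul_sum_sq (s := Icc 1 N) (f := lam)
    simpa [hcard] using this
  have hSB : lamBar^2 ≤ lamSqBar := by
    rw [hBar, hSqBar, div_pow]
    rw [div_le_div_iff₀ (by positivity) hNpos]
    nlinarith [hCS]
  -- z ≥ lamBar
  have hzB : lamBar ≤ z := by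
    rw [hBar, div_le_iff₀ hNpos]
    have : ∀ j ∈ Icc 1 N, lam j ≤ z := by
      intro j hj
      simp only [mem_Icc] at hj
      exact hmono j (N+1) hj.1 (by omega) (le_refl _)
    calc (∑ j ∈ Icc 1 N, lam j) ≤ ∑ j ∈ Icc 1 N, z := Finset.sum_le_sum this
    _ = z * N := by simp [hcard, mul_comm]
  -- lamBar ≥ 0
  have hB0 : 0 ≤ lamBar := by
    rw [hBar]
    apply div_nonneg _ hNpos.le
    apply Finset.sum_nonneg
    intro j hj
    simp only [mem_Icc] at hj
    exact le_trans hnonneg (hmono 1 j le_rfl hj.1 (by omega))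
  nlinarith [hSB, mul_le_mul_of_nonneg_left hSB hc, mul_nonneg hB0 hc, hzB, hcon, mul_pos (sub_pos.mpr hcon) (sub_pos.mpr hcon)]
end

section
/- For all $x\ge0$, the Riesz mean $R_2(x)=\sum_{m^2+n^2\le x,\ (m,n)\in\mathbb{Z}^2}(x-(m^2+n^2))^2$ satisfies $R_2(x)\le\tfrac{\pi}{3}\big(x+\tfrac12\big)^3$. -/
open Real

noncomputable def pp (s : ℝ) : ℝ := max s 0

lemma pp_nonneg (s : ℝ) : 0 ≤ pp s := le_max_right _ _

lemma pp_of_nonneg {s : ℝ} (h : 0 ≤ s) : pp s = s := max_eq_left h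

lemma pp_of_nonpos {s : ℝ} (h : s ≤ 0) : pp s = 0 := max_eq_right h

lemma continuous_pp : Continuous pp := continuous_id.max continuous_const

lemma tangent2 (w b : ℝ) : pp b ^ 2 + 2 * pp b * (w - b) ≤ pp w ^ 2 := by
  rcases le_or_gt b 0 with hb | hb
  · rw [pp_of_nonpos hb]; simp only [ne_eq, zero_pow, mul_zero, zero_mul, add_zero, zero_add, OfNat.ofNat_ne_zero, not_false_eq_true]; positivity
  · rw [pp_of_nonneg hb.le]
    rcases le_or_gt w 0 with hw | hw
    · rw [pp_of_nonpos hw]; nlinarith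
    · rw [pp_of_nonneg hw.le]; nlinarith [sq_nonneg (w - b)]

lemma tangent52 (w b : ℝ) :
    pp b ^ 2 * Real.sqrt (pp b) + 5/2 * (pp b * Real.sqrt (pp b)) * (w - b)
      ≤ pp w ^ 2 * Real.sqrt (pp w) := by
  rcases le_or_gt b 0 with hb | hb
  · rw [pp_of_nonpos hb]; simp; positivity
  · rw [pp_of_nonneg hb.le]
    rcases le_or_gt w 0 with hw | hw
    · rw [pp_of_nonpos hw]
      simp only [Real.sqrt_zero, mul_zero, ne_eq]
      have h1 : 0 ≤ Real.sqrt b := Real.sqrt_nonneg b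
      have h2 : b ^ 2 * Real.sqrt b + 5/2 * (b * Real.sqrt b) * (w - b)
          = Real.sqrt b * (b ^ 2 + 5/2 * b * (w - b)) := by ring
      rw [h2]
      have h3 : b ^ 2 + 5/2 * b * (w - b) ≤ 0 := by nlinarith
      exact mul_nonpos_of_nonneg_of_nonpos h1 h3
    · rw [pp_of_nonneg hw.le]
      have hsw : Real.sqrt w ^ 2 = w := Real.sq_sqrt hw.le
      have hsb : Real.sqrt b ^ 2 = b := Real.sq_sqrt hb.le
      set u := Real.sqrt w with hu
      set v := Real.sqrt b with hv
      have hu0 : 0 ≤ u := Real.sqrt_nonneg w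
      have hv0 : 0 ≤ v := Real.sqrt_nonneg b
      rw [← hsw, ← hsb]
      nlinarith [mul_nonneg (sq_nonneg (u - v))
        (show (0:ℝ) ≤ 2*u^3 + 4*v*u^2 + 6*v^2*u + 3*v^3 by positivity)]

lemma cont2 (c : ℝ) : Continuous fun t : ℝ => pp (c - t^2) ^ 2 :=
  ((continuous_pp.comp (continuous_const.sub (continuous_pow 2)))).pow 2

lemma cont52 (c : ℝ) : Continuous fun t : ℝ => pp (c - t^2) ^ 2 * Real.sqrt (pp (c - t^2)) :=
  (cont2 c).mul (Real.continuous_sqrt.comp (continuous_pp.comp (continuous_const.sub (continuous_pow 2))))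

lemma poly_integral {c : ℝ} (hc : 0 ≤ c) :
    ∫ t in (-Real.sqrt c)..(Real.sqrt c), (c - t^2)^2 = 16/15 * c^2 * Real.sqrt c := by
  have hd : ∀ t : ℝ, HasDerivAt (fun t : ℝ => c^2 * t - 2*c/3 * t^3 + 1/5 * t^5) ((c - t^2)^2) t := by
    intro t
    have h1 := (hasDerivAt_id t).const_mul (c^2)
    have h2 := (hasDerivAt_pow 3 t).const_mul (2*c/3)
    have h3 := (hasDerivAt_pow 5 t).const_mul (1/5 : ℝ)
    refine ((h1.sub h2).add h3).congr_deriv ?_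
    push_cast; ring
  rw [intervalIntegral.integral_eq_sub_of_hasDerivAt (fun t _ => hd t)
    ((Continuous.intervalIntegrable (by continuity) _ _))]
  have hs : Real.sqrt c ^ 2 = c := Real.sq_sqrt hc
  set s := Real.sqrt c
  linear_combination (2/5*s^3 - 14/15*c*s) * hs

-- integrand vanishes on [s, B] and [-B, -s]
lemma tail_zero {c s B : ℝ} (h : ∀ t ∈ Set.uIcc s B, c - t^2 ≤ 0) (f : ℝ → ℝ) (hf : f 0 = 0) :
    ∫ t in s..B, f (pp (c - t^2)) = 0 := by
  rw [intervalIntegral.integral_congr (g := fun _ => (0:ℝ))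
    (fun t ht => by rw [pp_of_nonpos (h t ht), hf])]
  simp

lemma eval2 {c B : ℝ} (hB : Real.sqrt (pp c) ≤ B) :
    ∫ t in (-B)..B, pp (c - t^2) ^ 2 = 16/15 * pp c ^ 2 * Real.sqrt (pp c) := by
  rcases le_or_gt c 0 with hc | hc
  · rw [pp_of_nonpos hc]
    rw [intervalIntegral.integral_congr (g := fun _ => (0:ℝ)) (fun t _ => by
      show pp (c - t^2) ^ 2 = 0
      rw [pp_of_nonpos (by nlinarith [sq_nonneg t])]; norm_num)]
    simp
  · rw [pp_of_nonneg hc.le] at *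
    set s := Real.sqrt c with hsdef
    have hs0 : 0 ≤ s := Real.sqrt_nonneg c
    have hs : s ^ 2 = c := Real.sq_sqrt hc.le
    have hBs : s ≤ B := hB
    have hint : ∀ a b : ℝ, IntervalIntegrable (fun t => pp (c - t^2) ^ 2) MeasureTheory.volume a b := by
      intro a b
      exact ((continuous_pp.comp (continuous_const.sub (continuous_pow 2))).pow 2).intervalIntegrable _ _
    have split1 : ∫ t in (-B)..B, pp (c - t^2) ^ 2
        = (∫ t in (-B)..(-s), pp (c - t^2) ^ 2) + (∫ t in (-s)..s, pp (c - t^2) ^ 2)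
          + (∫ t in s..B, pp (c - t^2) ^ 2) := by
      rw [intervalIntegral.integral_add_adjacent_intervals (hint _ _) (hint _ _),
        intervalIntegral.integral_add_adjacent_intervals (hint _ _) (hint _ _)]
    have hleft : (∫ t in (-B)..(-s), pp (c - t^2) ^ 2) = 0 := by
      have : ∀ t ∈ Set.uIcc (-B) (-s), c - t^2 ≤ 0 := by
        intro t ht
        rw [Set.uIcc_of_le (by linarith)] at ht
        nlinarith [ht.1, ht.2]
      exact tail_zero this (fun u => u^2) (by norm_num)
    have hright : (∫ t in s..B, pp (c - t^2) ^ 2) = 0 := by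
      have : ∀ t ∈ Set.uIcc s B, c - t^2 ≤ 0 := by
        intro t ht
        rw [Set.uIcc_of_le hBs] at ht
        nlinarith [ht.1, ht.2]
      exact tail_zero this (fun u => u^2) (by norm_num)
    have hmid : (∫ t in (-s)..s, pp (c - t^2) ^ 2) = 16/15 * c^2 * s := by
      rw [intervalIntegral.integral_congr (g := fun t => (c - t^2)^2) (fun t ht => by
        rw [Set.uIcc_of_le (by linarith)] at ht
        rw [pp_of_nonneg (by nlinarith [ht.1, ht.2])]), poly_integral hc.le]
    rw [split1, hleft, hright, hmid]; ring

lemma cos_pow_six : ∫ θ in (-(π/2))..(π/2), Real.cos θ ^ 6 = 5*π/16 := by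
  have h : ∀ θ : ℝ, Real.cos θ ^ 6 = (fun u => Real.sin u ^ 6) (θ + π/2) := by
    intro θ; simp [Real.sin_add_pi_div_two]
  simp_rw [h]
  rw [intervalIntegral.integral_comp_add_right (fun u => Real.sin u ^ 6) (π/2)]
  have e1 : -(π/2) + π/2 = (0:ℝ) := by ring
  have e2 : π/2 + π/2 = π := by ring
  rw [e1, e2]
  have h6 := integral_sin_pow_even (n := 3)
  norm_num [Finset.prod_range_succ] at h6
  rw [h6]; ring

lemma mid52 {c : ℝ} (hc : 0 < c) :
    ∫ t in (-Real.sqrt c)..(Real.sqrt c), pp (c - t^2) ^ 2 * Real.sqrt (pp (c - t^2))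
      = 5*π/16 * c^3 := by
  set s := Real.sqrt c with hsdef
  have hs0 : 0 ≤ s := Real.sqrt_nonneg c
  have hs : s ^ 2 = c := Real.sq_sqrt hc.le
  have hsub := intervalIntegral.integral_comp_smul_deriv
    (f := fun θ => s * Real.sin θ) (f' := fun θ => s * Real.cos θ)
    (g := fun u => pp (c - u^2) ^ 2 * Real.sqrt (pp (c - u^2)))
    (a := -(π/2)) (b := π/2)
    (fun θ _ => (Real.hasDerivAt_sin θ).const_mul s)
    ((continuous_const.mul Real.continuous_cos).continuousOn) (cont52 c)
  simp only [Real.sin_pi_div_two, Real.sin_neg, mul_one, mul_neg] at hsub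
  rw [← hsub]
  have hcongr : ∀ θ ∈ Set.uIcc (-(π/2)) (π/2),
      (s * Real.cos θ) • (((fun u => pp (c - u^2) ^ 2 * Real.sqrt (pp (c - u^2)))
        ∘ (fun θ => s * Real.sin θ)) θ) = c^3 * Real.cos θ ^ 6 := by
    intro θ hθ
    rw [Set.uIcc_of_le (by linarith [Real.pi_pos] : -(π/2) ≤ π/2)] at hθ
    have hcos : 0 ≤ Real.cos θ := Real.cos_nonneg_of_mem_Icc (by
      constructor
      · exact hθ.1
      · exact hθ.2)
    have key : c - (s * Real.sin θ)^2 = c * Real.cos θ ^ 2 := by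
      have := Real.sin_sq_add_cos_sq θ
      nlinarith [hs]
    show (s * Real.cos θ) * (pp (c - (s * Real.sin θ)^2) ^ 2
      * Real.sqrt (pp (c - (s * Real.sin θ)^2))) = c^3 * Real.cos θ ^ 6
    rw [key, pp_of_nonneg (by positivity)]
    rw [show c * Real.cos θ ^ 2 = (s * Real.cos θ)^2 by rw [mul_pow, hs],
      Real.sqrt_sq (by positivity)]
    linear_combination (Real.cos θ^6 * (s^4 + s^2*c + c^2)) * hs
  have heq : (∫ x in (-(π/2))..(π/2), (s * Real.cos x) • (((fun u => pp (c - u^2) ^ 2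
        * Real.sqrt (pp (c - u^2))) ∘ (fun θ => s * Real.sin θ)) x))
      = ∫ x in (-(π/2))..(π/2), c^3 * Real.cos x ^ 6 :=
    intervalIntegral.integral_congr (fun θ hθ => hcongr θ hθ)
  rw [heq, intervalIntegral.integral_const_mul, cos_pow_six]
  ring

lemma eval52 {c B : ℝ} (hB : Real.sqrt (pp c) ≤ B) :
    ∫ t in (-B)..B, pp (c - t^2) ^ 2 * Real.sqrt (pp (c - t^2)) = 5*π/16 * pp c ^ 3 := by
  rcases le_or_gt c 0 with hc | hc
  · rw [pp_of_nonpos hc]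
    rw [intervalIntegral.integral_congr (g := fun _ => (0:ℝ)) (fun t _ => by
      show pp (c - t^2) ^ 2 * Real.sqrt (pp (c - t^2)) = 0
      rw [pp_of_nonpos (by nlinarith [sq_nonneg t])]; simp)]
    simp
  · rw [pp_of_nonneg hc.le] at *
    set s := Real.sqrt c with hsdef
    have hs0 : 0 ≤ s := Real.sqrt_nonneg c
    have hs : s ^ 2 = c := Real.sq_sqrt hc.le
    have hint : ∀ a b : ℝ, IntervalIntegrable
        (fun t => pp (c - t^2) ^ 2 * Real.sqrt (pp (c - t^2))) MeasureTheory.volume a b :=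
      fun a b => (cont52 c).intervalIntegrable _ _
    rw [show (∫ t in (-B)..B, pp (c - t^2) ^ 2 * Real.sqrt (pp (c - t^2)))
        = (∫ t in (-B)..(-s), pp (c - t^2) ^ 2 * Real.sqrt (pp (c - t^2)))
          + (∫ t in (-s)..s, pp (c - t^2) ^ 2 * Real.sqrt (pp (c - t^2)))
          + (∫ t in s..B, pp (c - t^2) ^ 2 * Real.sqrt (pp (c - t^2))) by
      rw [intervalIntegral.integral_add_adjacent_intervals (hint _ _) (hint _ _),
        intervalIntegral.integral_add_adjacent_intervals (hint _ _) (hint _ _)]]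
    have hleft : (∫ t in (-B)..(-s), pp (c - t^2) ^ 2 * Real.sqrt (pp (c - t^2))) = 0 := by
      rw [intervalIntegral.integral_congr (g := fun _ => (0:ℝ)) (fun t ht => by
        rw [Set.uIcc_of_le (by linarith : -B ≤ -s)] at ht
        show pp (c - t^2) ^ 2 * Real.sqrt (pp (c - t^2)) = 0
        rw [pp_of_nonpos (by nlinarith [ht.1, ht.2])]; simp)]
      simp
    have hright : (∫ t in s..B, pp (c - t^2) ^ 2 * Real.sqrt (pp (c - t^2))) = 0 := by
      rw [intervalIntegral.integral_congr (g := fun _ => (0:ℝ)) (fun t ht => by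
        rw [Set.uIcc_of_le (by linarith : s ≤ B)] at ht
        show pp (c - t^2) ^ 2 * Real.sqrt (pp (c - t^2)) = 0
        rw [pp_of_nonpos (by nlinarith [ht.1, ht.2])]; simp)]
      simp
    rw [hleft, hright, mid52 hc]
    ring

lemma mean_integral (c μ : ℝ) :
    ∫ t in (μ - 1/2)..(μ + 1/2), (c - t^2) = c - 1/12 - μ^2 := by
  have hd : ∀ t : ℝ, HasDerivAt (fun t : ℝ => c * t - t^3/3) (c - t^2) t := by
    intro t
    have h1 := (hasDerivAt_id t).const_mul c
    have h2 := (hasDerivAt_pow 3 t).div_const 3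
    refine (h1.sub h2).congr_deriv ?_
    push_cast; ring
  rw [intervalIntegral.integral_eq_sub_of_hasDerivAt (fun t _ => hd t)
    ((Continuous.intervalIntegrable (by continuity) _ _))]
  ring

lemma step2 (c μ : ℝ) :
    pp (c - 1/12 - μ^2) ^ 2 ≤ ∫ t in (μ - 1/2)..(μ + 1/2), pp (c - t^2) ^ 2 := by
  set b := c - 1/12 - μ^2 with hb
  have hcont : Continuous fun t : ℝ => pp b ^ 2 + 2 * pp b * ((c - t^2) - b) := by
    continuity
  have hmono := intervalIntegral.integral_mono_on (μ := MeasureTheory.volume)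
    (f := fun t => pp b ^ 2 + 2 * pp b * ((c - t^2) - b))
    (g := fun t => pp (c - t^2) ^ 2)
    (by linarith : μ - 1/2 ≤ μ + 1/2)
    (hcont.intervalIntegrable _ _)
    (((continuous_pp.comp (continuous_const.sub (continuous_pow 2))).pow 2).intervalIntegrable _ _)
    (fun t _ => tangent2 (c - t^2) b)
  have hval : (∫ t in (μ - 1/2)..(μ + 1/2), (pp b ^ 2 + 2 * pp b * ((c - t^2) - b)))
      = pp b ^ 2 := by
    have h1 : (fun t : ℝ => pp b ^ 2 + 2 * pp b * ((c - t^2) - b))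
        = fun t : ℝ => (pp b ^ 2 - 2 * pp b * b) + 2 * pp b * (c - t^2) := by
      funext t; ring
    rw [h1, intervalIntegral.integral_add intervalIntegrable_const
      ((by continuity : Continuous fun t : ℝ => 2 * pp b * (c - t^2)).intervalIntegrable _ _),
      intervalIntegral.integral_const_mul, mean_integral, intervalIntegral.integral_const,
      ← hb, smul_eq_mul]
    ring
  rw [← hval]
  exact hmono

lemma step52 (c μ : ℝ) :
    pp (c - 1/12 - μ^2) ^ 2 * Real.sqrt (pp (c - 1/12 - μ^2))
      ≤ ∫ t in (μ - 1/2)..(μ + 1/2), pp (c - t^2) ^ 2 * Real.sqrt (pp (c - t^2)) := by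
  set b := c - 1/12 - μ^2 with hb
  have hcont : Continuous fun t : ℝ =>
      pp b ^ 2 * Real.sqrt (pp b) + 5/2 * (pp b * Real.sqrt (pp b)) * ((c - t^2) - b) := by
    continuity
  have hmono := intervalIntegral.integral_mono_on (μ := MeasureTheory.volume)
    (f := fun t => pp b ^ 2 * Real.sqrt (pp b) + 5/2 * (pp b * Real.sqrt (pp b)) * ((c - t^2) - b))
    (g := fun t => pp (c - t^2) ^ 2 * Real.sqrt (pp (c - t^2)))
    (by linarith : μ - 1/2 ≤ μ + 1/2)
    (hcont.intervalIntegrable _ _)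
    ((cont52 c).intervalIntegrable _ _)
    (fun t _ => tangent52 (c - t^2) b)
  have hval : (∫ t in (μ - 1/2)..(μ + 1/2),
      (pp b ^ 2 * Real.sqrt (pp b) + 5/2 * (pp b * Real.sqrt (pp b)) * ((c - t^2) - b)))
      = pp b ^ 2 * Real.sqrt (pp b) := by
    have h1 : (fun t : ℝ => pp b ^ 2 * Real.sqrt (pp b)
          + 5/2 * (pp b * Real.sqrt (pp b)) * ((c - t^2) - b))
        = fun t : ℝ => (pp b ^ 2 * Real.sqrt (pp b) - 5/2 * (pp b * Real.sqrt (pp b)) * b)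
          + 5/2 * (pp b * Real.sqrt (pp b)) * (c - t^2) := by
      funext t; ring
    rw [h1, intervalIntegral.integral_add intervalIntegrable_const
      ((by continuity : Continuous fun t : ℝ =>
        5/2 * (pp b * Real.sqrt (pp b)) * (c - t^2)).intervalIntegrable _ _),
      intervalIntegral.integral_const_mul, mean_integral, intervalIntegral.integral_const,
      ← hb, smul_eq_mul]
    ring
  rw [← hval]
  exact hmono

lemma sum_le_int (N : ℕ) (f : ℝ → ℝ) (hf : Continuous f) (g : ℤ → ℝ)
    (h : ∀ n : ℤ, g n ≤ ∫ t in ((n:ℝ) - 1/2)..((n:ℝ) + 1/2), f t) :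
    ∑ n ∈ Finset.Icc (-(N:ℤ)) N, g n ≤ ∫ t in (-((N:ℝ) + 1/2))..((N:ℝ) + 1/2), f t := by
  have key : ∑ k ∈ Finset.range (2*N+1),
      ∫ t in ((k:ℝ) - N - 1/2)..(((k:ℕ)+1:ℕ) - N - 1/2 : ℝ), f t
      = ∫ t in (-((N:ℝ) + 1/2))..((N:ℝ) + 1/2), f t := by
    have := intervalIntegral.sum_integral_adjacent_intervals
      (a := fun k : ℕ => (k:ℝ) - N - 1/2) (n := 2*N+1) (μ := MeasureTheory.volume)
      (fun k _ => hf.intervalIntegrable _ _)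
    rw [this]
    congr 1
    · push_cast; ring
    · push_cast; ring
  calc ∑ n ∈ Finset.Icc (-(N:ℤ)) N, g n
      ≤ ∑ n ∈ Finset.Icc (-(N:ℤ)) N, ∫ t in ((n:ℝ) - 1/2)..((n:ℝ) + 1/2), f t :=
        Finset.sum_le_sum fun n _ => h n
    _ = ∑ k ∈ Finset.range (2*N+1),
        ∫ t in ((k:ℝ) - N - 1/2)..(((k:ℕ)+1:ℕ) - N - 1/2 : ℝ), f t := by
        refine Finset.sum_nbij' (fun n => (n + N).toNat) (fun k => (k : ℤ) - N) ?_ ?_ ?_ ?_ ?_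
        · intro n hn
          rw [Finset.mem_Icc] at hn
          rw [Finset.mem_range]
          omega
        · intro k hk
          rw [Finset.mem_range] at hk
          rw [Finset.mem_Icc]
          omega
        · intro n hn
          rw [Finset.mem_Icc] at hn
          omega
        · intro k hk
          rw [Finset.mem_range] at hk
          omega
        · intro n hn
          rw [Finset.mem_Icc] at hn
          have h1 : (((n + N).toNat : ℝ)) = (n:ℝ) + N := by
            have : ((n + N).toNat : ℤ) = n + N := Int.toNat_of_nonneg (by omega)
            exact_mod_cast congrArg (fun z : ℤ => (z:ℝ)) this
          congr 1
          · rw [h1]; ring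
          · push_cast [h1]; ring
    _ = ∫ t in (-((N:ℝ) + 1/2))..((N:ℝ) + 1/2), f t := key

/-- The Riesz mean `R₂(x) = ∑_{m²+n² ≤ x} (x - (m²+n²))²`. -/
noncomputable def rieszMean2 (x : ℝ) : ℝ :=
  ∑' p : {p : ℤ × ℤ // ((p.1 : ℝ)^2 + (p.2 : ℝ)^2) ≤ x},
    (x - (((p : ℤ × ℤ).1 : ℝ)^2 + ((p : ℤ × ℤ).2 : ℝ)^2))^2

/-- for all `x ≥ 0`, `R₂(x) ≤ (π/3)(x + 1/2)³`. -/
theorem stmt_13 (x : ℝ) (hx : 0 ≤ x) :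
    rieszMean2 x ≤ (π / 3) * (x + 1/2)^3 := by
  obtain ⟨N, hN⟩ := exists_nat_ge (Real.sqrt (x + 1))
  have hx1 : x + 1 ≤ (N:ℝ)^2 := by
    have h := Real.sq_sqrt (by linarith : (0:ℝ) ≤ x + 1)
    calc x + 1 = Real.sqrt (x+1) ^ 2 := h.symm
      _ ≤ (N:ℝ)^2 := by
        apply pow_le_pow_left₀ (Real.sqrt_nonneg _) hN
  have hN0 : (0:ℝ) ≤ N := (Real.sqrt_nonneg _).trans hN
  have hsN : ∀ c : ℝ, c ≤ x + 1 → Real.sqrt (pp c) ≤ (N:ℝ) + 1/2 := by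
    intro c hc
    have h1 : pp c ≤ ((N:ℝ) + 1/2)^2 := by
      have : pp c ≤ x + 1 := max_le hc (by linarith)
      nlinarith
    calc Real.sqrt (pp c) ≤ Real.sqrt (((N:ℝ) + 1/2)^2) := Real.sqrt_le_sqrt h1
      _ = (N:ℝ) + 1/2 := Real.sqrt_sq (by linarith)
  set I : Finset ℤ := Finset.Icc (-(N:ℤ)) N with hI
  have hmem : ∀ p : ℤ × ℤ, ((p.1 : ℝ)^2 + (p.2 : ℝ)^2) ≤ x → p ∈ I ×ˢ I := by
    rintro ⟨m, n⟩ hp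
    simp only [Finset.mem_product, hI, Finset.mem_Icc]
    have hm2 : (m:ℝ)^2 ≤ (N:ℝ)^2 := by nlinarith [sq_nonneg ((n:ℝ))]
    have hn2 : (n:ℝ)^2 ≤ (N:ℝ)^2 := by nlinarith [sq_nonneg ((m:ℝ))]
    have hm1 : (m:ℝ) ≤ (N:ℝ) := by nlinarith
    have hm1' : -(N:ℝ) ≤ (m:ℝ) := by nlinarith
    have hn1 : (n:ℝ) ≤ (N:ℝ) := by nlinarith
    have hn1' : -(N:ℝ) ≤ (n:ℝ) := by nlinarith
    constructor
    · exact ⟨by exact_mod_cast hm1', by exact_mod_cast hm1⟩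
    · exact ⟨by exact_mod_cast hn1', by exact_mod_cast hn1⟩
  have hfin : {p : ℤ × ℤ | ((p.1 : ℝ)^2 + (p.2 : ℝ)^2) ≤ x}.Finite :=
    Set.Finite.subset (I ×ˢ I).finite_toSet (fun p hp => hmem p hp)
  have h0 : rieszMean2 x = ∑' p : ℤ × ℤ,
      Set.indicator {p : ℤ × ℤ | ((p.1:ℝ)^2 + (p.2:ℝ)^2) ≤ x}
        (fun p => (x - ((p.1:ℝ)^2 + (p.2:ℝ)^2))^2) p :=
    tsum_subtype {p : ℤ × ℤ | ((p.1:ℝ)^2 + (p.2:ℝ)^2) ≤ x}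
      (fun p => (x - ((p.1:ℝ)^2 + (p.2:ℝ)^2))^2)
  have h1 : rieszMean2 x = ∑ p ∈ hfin.toFinset, (x - ((p.1:ℝ)^2 + (p.2:ℝ)^2))^2 := by
    rw [h0, tsum_eq_sum (s := hfin.toFinset)
      (fun p hp => Set.indicator_of_notMem (fun hm => hp (hfin.mem_toFinset.2 hm)) _)]
    exact Finset.sum_congr rfl (fun p hp => Set.indicator_of_mem (hfin.mem_toFinset.1 hp) _)
  have h2 : ∑ p ∈ hfin.toFinset, (x - ((p.1:ℝ)^2 + (p.2:ℝ)^2))^2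
      ≤ ∑ p ∈ I ×ˢ I, pp (x - ((p.1:ℝ)^2 + (p.2:ℝ)^2)) ^ 2 := by
    calc ∑ p ∈ hfin.toFinset, (x - ((p.1:ℝ)^2 + (p.2:ℝ)^2))^2
        = ∑ p ∈ hfin.toFinset, pp (x - ((p.1:ℝ)^2 + (p.2:ℝ)^2)) ^ 2 :=
          Finset.sum_congr rfl (fun p hp => by
            rw [pp_of_nonneg (sub_nonneg.2 (hfin.mem_toFinset.1 hp))])
      _ ≤ ∑ p ∈ I ×ˢ I, pp (x - ((p.1:ℝ)^2 + (p.2:ℝ)^2)) ^ 2 := by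
          apply Finset.sum_le_sum_of_subset_of_nonneg
          · intro p hp
            exact hmem p (hfin.mem_toFinset.1 hp)
          · intro p _ _
            positivity
  rw [h1]
  refine h2.trans ?_
  rw [Finset.sum_product]
  have inner : ∀ m : ℤ, ∑ n ∈ I, pp (x - ((m:ℝ)^2 + (n:ℝ)^2)) ^ 2
      ≤ 16/15 * (pp (x + 1/6 - 1/12 - (m:ℝ)^2) ^ 2
        * Real.sqrt (pp (x + 1/6 - 1/12 - (m:ℝ)^2))) := by
    intro m
    have hstep : ∀ n : ℤ, pp (x - ((m:ℝ)^2 + (n:ℝ)^2)) ^ 2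
        ≤ ∫ t in ((n:ℝ) - 1/2)..((n:ℝ) + 1/2), pp ((x - (m:ℝ)^2 + 1/12) - t^2) ^ 2 := by
      intro n
      have h := step2 (x - (m:ℝ)^2 + 1/12) (n:ℝ)
      have e : x - (m:ℝ)^2 + 1/12 - 1/12 - (n:ℝ)^2 = x - ((m:ℝ)^2 + (n:ℝ)^2) := by ring
      rwa [e] at h
    have hb := sum_le_int N _ (cont2 _) _ hstep
    rw [eval2 (hsN _ (by nlinarith [sq_nonneg ((m:ℝ))]))] at hb
    have e2 : x + 1/6 - 1/12 - (m:ℝ)^2 = x - (m:ℝ)^2 + 1/12 := by ring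
    rw [e2]
    linarith
  refine (Finset.sum_le_sum (fun m _ => inner m)).trans ?_
  have houter := sum_le_int N
    (fun t => 16/15 * (pp ((x + 1/6) - t^2) ^ 2 * Real.sqrt (pp ((x + 1/6) - t^2))))
    (continuous_const.mul ((cont52 (x + 1/6)).congr (fun t => by ring)))
    (fun m => 16/15 * (pp (x + 1/6 - 1/12 - (m:ℝ)^2) ^ 2
      * Real.sqrt (pp (x + 1/6 - 1/12 - (m:ℝ)^2))))
    (fun m => by
      rw [intervalIntegral.integral_const_mul]
      exact mul_le_mul_of_nonneg_left (step52 (x + 1/6) (m:ℝ)) (by norm_num))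
  refine houter.trans ?_
  rw [intervalIntegral.integral_const_mul,
    eval52 (hsN _ (by linarith)), pp_of_nonneg (by linarith : (0:ℝ) ≤ x + 1/6)]
  have h3 : (x + 1/6)^3 ≤ (x + 1/2)^3 :=
    pow_le_pow_left₀ (by linarith) (by linarith) 3
  have hpi : (0:ℝ) < π := Real.pi_pos
  nlinarith [h3]
end

section
/- For every real $\beta\ge1$ (i.e. $\beta=\gamma/\alpha$), $\sum_{j\in\mathbb{Z}}\max(\beta-j^2,0)^2\le\tfrac{16}{15}\big(\beta+\tfrac14\big)^{5/2}$. -/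
/-- Antiderivative of `(c - x^2)^2` (with `c = r^2`), used for a telescoping bound. -/
noncomputable def stmt14P (c x : ℝ) : ℝ := c^2*x - 2/3*c*x^3 + x^5/5

lemma stmt14_key (r n : ℝ) (hn : 1 ≤ n) (h2 : n^2 + 1/4 ≤ r^2) (h0 : 0 ≤ r) :
    2*((r^2)^2*(n+1/2) - (2/3)*(r^2)*(n+1/2)^3 + (n+1/2)^5/5)
      - (2*n+1)*((r^2-1/4)/3 + 1/30) ≤ 16/15*r^5 := by
  have hrn : n < r := by nlinarith
  have hr1 : 1 ≤ r := lt_of_le_of_lt hn hrn |>.le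
  obtain ⟨d, rfl⟩ : ∃ d, n = r + d - 1/2 := ⟨n + 1/2 - r, by ring⟩
  have hd2 : d ≤ 1/2 := by linarith
  rcases le_or_gt d 0 with hd0 | hd0
  · have hd3 : d^3 ≤ 0 := Odd.pow_nonpos ⟨1, by norm_num⟩ hd0
    nlinarith [sq_nonneg (d + 5*r/2), mul_nonpos_of_nonpos_of_nonneg hd3 (sq_nonneg (d + 5*r/2)), mul_nonpos_of_nonpos_of_nonneg hd3 (sq_nonneg r), mul_nonneg (by linarith : (0:ℝ) ≤ r + d) (by nlinarith : (0:ℝ) ≤ r^2/3 - 1/20)]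
  · nlinarith [mul_nonneg hd0.le (sq_nonneg r), mul_nonneg hd0.le hd0.le, mul_nonneg (mul_nonneg hd0.le hd0.le) hd0.le, mul_nonneg (mul_nonneg (mul_nonneg hd0.le hd0.le) hd0.le) hd0.le, mul_nonneg (by linarith : (0:ℝ) ≤ 1/2 - d) (sq_nonneg r), sq_nonneg (r - 1), mul_nonneg (mul_nonneg hd0.le hd0.le) (by nlinarith : (0:ℝ) ≤ r^2 - 1), mul_nonneg (by linarith : (0:ℝ) ≤ 1/2 - d) (by nlinarith : (0:ℝ) ≤ r^2 - 1)]

/-- for every real `β ≥ 1`,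
`∑_{j ∈ ℤ} max(β - j², 0)² ≤ (16/15)(β + 1/4)^{5/2}`. -/
theorem stmt_14 (β : ℝ) (hβ : 1 ≤ β) :
    (∑' j : ℤ, max (β - (j : ℝ)^2) 0 ^ 2) ≤ (16/15) * (β + 1/4) ^ ((5 : ℝ)/2) := by
  have hb0 : (0:ℝ) ≤ β + 1/4 := by linarith
  set r := Real.sqrt (β + 1/4) with hrdef
  have hr0 : 0 ≤ r := Real.sqrt_nonneg _
  have hr2 : r^2 = β + 1/4 := Real.sq_sqrt hb0
  have hrpow : (β + 1/4) ^ ((5:ℝ)/2) = r^5 := by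
    rw [hrdef, show ((5:ℝ)/2) = (1/2 : ℝ) * (5:ℕ) by norm_num, Real.rpow_mul hb0,
      Real.rpow_natCast, Real.sqrt_eq_rpow]
  have hsβ1 : 1 ≤ Real.sqrt β := by
    rw [show (1:ℝ) = Real.sqrt 1 by simp]
    exact Real.sqrt_le_sqrt hβ
  set N : ℕ := ⌊Real.sqrt β⌋₊ with hNdef
  have hN1 : (1:ℝ) ≤ (N:ℝ) := by
    have : 1 ≤ N := Nat.le_floor (by exact_mod_cast hsβ1)
    exact_mod_cast this
  have hβ0 : (0:ℝ) ≤ β := by linarith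
  have hN2 : ((N:ℝ))^2 ≤ β := by
    have h := Nat.floor_le (Real.sqrt_nonneg β)
    nlinarith [Real.sq_sqrt hβ0, Real.sqrt_nonneg β]
  have hN3 : β < ((N:ℝ)+1)^2 := by
    have h := Nat.lt_floor_add_one (Real.sqrt β)
    nlinarith [Real.sq_sqrt hβ0, Real.sqrt_nonneg β]
  have hfin : ∀ j : ℤ, j ∉ Finset.Icc (-(N:ℤ)) (N:ℤ) → max (β - (j:ℝ)^2) 0 ^ 2 = 0 := by
    intro j hj
    rw [Finset.mem_Icc, not_and_or, not_le, not_le] at hj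
    have habs : ((N:ℤ)+1) ≤ |j| := by
      rcases hj with h | h
      · rw [abs_of_neg (by omega : j < 0)]; omega
      · rw [abs_of_pos (by omega : 0 < j)]; omega
    have habsR : ((N:ℝ)+1) ≤ |(j:ℝ)| := by
      rw [← Int.cast_abs]
      exact_mod_cast habs
    have hj2 : ((N:ℝ)+1)^2 ≤ (j:ℝ)^2 := by
      calc ((N:ℝ)+1)^2 ≤ |(j:ℝ)|^2 := by
            apply pow_le_pow_left₀ (by positivity) habsR
        _ = (j:ℝ)^2 := sq_abs _
    have hneg : β - (j:ℝ)^2 ≤ 0 := by nlinarith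
    rw [max_eq_right hneg]
    norm_num
  rw [tsum_eq_sum hfin, hrpow]
  have hmap : Finset.Icc (-(N:ℤ)) (N:ℤ)
      = (Finset.range (2*N+1)).map ⟨fun i : ℕ => (i:ℤ) - N, show Function.Injective (fun i : ℕ => (i:ℤ) - N) from by intro a b h; simpa using h⟩ := by
    ext j
    simp only [Finset.mem_map, Finset.mem_Icc, Finset.mem_range, Function.Embedding.coeFn_mk]
    constructor
    · rintro ⟨h1, h2⟩
      exact ⟨(j + N).toNat, by omega, by omega⟩
    · rintro ⟨i, hi, rfl⟩
      omega
  rw [hmap, Finset.sum_map]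
  simp only [Function.Embedding.coeFn_mk]
  have hterm : ∀ i ∈ Finset.range (2*N+1),
      max (β - ((((i:ℤ) - (N:ℤ)):ℤ):ℝ)^2) 0 ^ 2
        = ((fun i : ℕ => stmt14P (β+1/4) ((i:ℝ) - (N:ℝ) - 1/2)) (i+1)
            - (fun i : ℕ => stmt14P (β+1/4) ((i:ℝ) - (N:ℝ) - 1/2)) i)
          - (β/3 + 1/30) := by
    intro i hi
    rw [Finset.mem_range] at hi
    have hsq : ((i:ℤ) - (N:ℤ))^2 ≤ ((N:ℤ))^2 := by
      have h1 : -(N:ℤ) ≤ (i:ℤ) - N := by omega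
      have h2 : (i:ℤ) - N ≤ N := by omega
      exact sq_le_sq' h1 h2
    have hsqR : ((((i:ℤ) - (N:ℤ)):ℤ):ℝ)^2 ≤ ((N:ℝ))^2 := by exact_mod_cast hsq
    have hpos : 0 ≤ β - ((((i:ℤ) - (N:ℤ)):ℤ):ℝ)^2 := by linarith
    rw [max_eq_left hpos]
    simp only [stmt14P]
    push_cast
    ring
  rw [Finset.sum_congr rfl hterm, Finset.sum_sub_distrib,
    Finset.sum_range_sub (fun i : ℕ => stmt14P (β+1/4) ((i:ℝ) - (N:ℝ) - 1/2)),
    Finset.sum_const, Finset.card_range]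
  have hkey := stmt14_key r (N:ℝ) hN1 (by rw [hr2]; linarith) hr0
  rw [hr2] at hkey
  have heq : stmt14P (β+1/4) ((((2*N+1):ℕ):ℝ) - (N:ℝ) - 1/2)
      - stmt14P (β+1/4) (((0:ℕ):ℝ) - (N:ℝ) - 1/2)
      - ((2*N+1):ℕ) • (β/3 + 1/30)
      = 2*((β+1/4)^2*((N:ℝ)+1/2) - (2/3)*(β+1/4)*((N:ℝ)+1/2)^3 + ((N:ℝ)+1/2)^5/5)
        - (2*(N:ℝ)+1)*((β+1/4-1/4)/3 + 1/30) := by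
    simp only [stmt14P, nsmul_eq_mul]
    push_cast
    ring
  rw [heq]
  exact hkey
end
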